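/- arXiv:2006.04567 — 5 statements merged into one kernel-verified Lean document; each statement's English description precedes it below -/
import Mathlib

section
/- For every k ≥ 1, let B_k be the binary linear code of length 2^k − 1 generated by the k row vectors 1_1^{(k)}, …, 1_k^{(k)}, where 1_i^{(k)} ∈ (F_2)^{2^k − 1} has its first 2^i − 1 coordinates equal to 1 and all remaining coordinates equal to 0. Then B_k has dimension k, and for every integer w with 1 ≤ w ≤ 2^k − 1 there is exactly one codeword of B_k of Hamming weight w; in particular S(B_k) = {1, 2, …, 2^k − 1}, so B_k is a strictly compact MWS code. -/
open scoped Classical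
open Finset

/-- `qk q k = (q^k - 1)/(q - 1)`, the number of nonzero weights an MWS code of dimension `k`
over a field with `q` elements has. -/
def qk (q k : ℕ) : ℕ := (q ^ k - 1) / (q - 1)

/-- The set of nonzero Hamming weights of a linear code `C ⊆ F^n`. -/
noncomputable def weightSet {F : Type*} [Field F] [Fintype F] {n : ℕ}
    (C : Submodule F (Fin n → F)) : Finset ℕ :=
  Finset.image (fun c => hammingNorm c)
    (Finset.univ.filter fun c : Fin n → F => c ∈ C ∧ c ≠ 0)

/-- A code is non-degenerate if no coordinate is identically zero. -/
def Nondeg {F : Type*} [Field F] {n : ℕ} (C : Submodule F (Fin n → F)) : Prop :=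
  ∀ i : Fin n, ∃ c ∈ C, c i ≠ 0

/-- Maximum weight spectrum code of dimension `k`. -/
def IsMWS {F : Type*} [Field F] [Fintype F] {n : ℕ}
    (C : Submodule F (Fin n → F)) (k : ℕ) : Prop :=
  (weightSet C).card = qk (Fintype.card F) k

/-- The spread of an MWS code. -/
noncomputable def spread {F : Type*} [Field F] [Fintype F] {n : ℕ}
    (C : Submodule F (Fin n → F)) (k : ℕ) : ℤ :=
  (n : ℤ) * qk (Fintype.card F) k
    - ((qk (Fintype.card F) k * (qk (Fintype.card F) k - 1)) / 2 : ℕ)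
    - ∑ w ∈ weightSet C, (w : ℤ)

/-- A compact MWS code: the weight set is an interval of `q_k` consecutive integers starting
at the minimum distance. -/
def IsCompactMWS {F : Type*} [Field F] [Fintype F] {n : ℕ}
    (C : Submodule F (Fin n → F)) (k : ℕ) : Prop :=
  IsMWS C k ∧ ∃ d, d ∈ weightSet C ∧
    weightSet C = Finset.Icc d (d + qk (Fintype.card F) k - 1)

/-- A strictly compact MWS code: a compact MWS code whose length is itself a weight. -/
def IsStrictlyCompactMWS {F : Type*} [Field F] [Fintype F] {n : ℕ}
    (C : Submodule F (Fin n → F)) (k : ℕ) : Prop :=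
  IsCompactMWS C k ∧ n ∈ weightSet C

namespace Stmt1Aux

/-- The generators: `gen k i` has its first `2^(i+1) - 1` coordinates equal to 1. -/
def gen (k : ℕ) (i : Fin k) : Fin (2 ^ k - 1) → ZMod 2 :=
  fun j => if (j : ℕ) < 2 ^ ((i : ℕ) + 1) - 1 then (1 : ZMod 2) else 0

/-- The linear map sending coefficient vectors to codewords. -/
noncomputable def L (k : ℕ) : (Fin k → ZMod 2) →ₗ[ZMod 2] (Fin (2 ^ k - 1) → ZMod 2) :=
  Fintype.linearCombination (ZMod 2) (gen k)

/-- Suffix sums of the coefficients: the value of the codeword on block `t`. -/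
def sfun {k : ℕ} (a : Fin k → ZMod 2) (t : ℕ) : ZMod 2 :=
  ∑ i : Fin k, if t ≤ (i : ℕ) then a i else 0

variable {k : ℕ}

lemma lt_gen_iff (i : Fin k) (j : ℕ) :
    (j < 2 ^ ((i : ℕ) + 1) - 1) ↔ Nat.log 2 (j + 1) ≤ (i : ℕ) := by
  have h2 : 0 < 2 ^ ((i : ℕ) + 1) := Nat.two_pow_pos _
  rw [← Nat.lt_succ_iff, Nat.log_lt_iff_lt_pow one_lt_two (Nat.succ_ne_zero j)]
  omega

lemma L_apply (a : Fin k → ZMod 2) (j : Fin (2 ^ k - 1)) :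
    L k a j = sfun a (Nat.log 2 ((j : ℕ) + 1)) := by
  have h : L k a = ∑ i, a i • gen k i := Fintype.linearCombination_apply _ _ _
  rw [h]
  simp only [Finset.sum_apply, Pi.smul_apply, gen, smul_eq_mul, mul_ite, mul_one, mul_zero, sfun]
  exact Finset.sum_congr rfl fun i _ => if_congr (lt_gen_iff i j) rfl rfl

lemma sfun_ge (a : Fin k → ZMod 2) {t : ℕ} (ht : k ≤ t) : sfun a t = 0 := by
  unfold sfun
  apply Finset.sum_eq_zero
  intro i _
  have := i.isLt
  rw [if_neg (by omega)]

lemma sfun_rec (a : Fin k → ZMod 2) (t : ℕ) :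
    sfun a t = (if h : t < k then a ⟨t, h⟩ else 0) + sfun a (t + 1) := by
  unfold sfun
  have h1 : ∀ i : Fin k, (if t ≤ (i : ℕ) then a i else 0)
      = (if (i : ℕ) = t then a i else 0) + (if t + 1 ≤ (i : ℕ) then a i else 0) := by
    intro i
    split_ifs <;> simp_all <;> omega
  rw [Finset.sum_congr rfl fun i _ => h1 i, Finset.sum_add_distrib]
  congr 1
  by_cases h : t < k
  · rw [dif_pos h, Finset.sum_eq_single (⟨t, h⟩ : Fin k)]
    · rw [if_pos rfl]
    · intro b _ hb
      exact if_neg (fun hbt => hb (Fin.ext hbt))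
    · intro habs; exact absurd (Finset.mem_univ _) habs
  · rw [dif_neg h]
    apply Finset.sum_eq_zero
    intro i _
    have := i.isLt
    exact if_neg (by omega)

lemma a_eq (a : Fin k → ZMod 2) (i : Fin k) :
    a i = sfun a (i : ℕ) + sfun a ((i : ℕ) + 1) := by
  have h := sfun_rec a (i : ℕ)
  rw [dif_pos i.isLt] at h
  have h2 : (⟨(i : ℕ), i.isLt⟩ : Fin k) = i := rfl
  rw [h2] at h
  rw [h, add_assoc, CharTwo.add_self_eq_zero, add_zero]

lemma eq_of_sfun_eq {a b : Fin k → ZMod 2} (h : ∀ t < k, sfun a t = sfun b t) : a = b := by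
  have h' : ∀ t, sfun a t = sfun b t := by
    intro t
    by_cases ht : t < k
    · exact h t ht
    · rw [sfun_ge a (le_of_not_gt ht), sfun_ge b (le_of_not_gt ht)]
  funext i
  rw [a_eq a i, a_eq b i, h' _, h' _]

lemma fiber_card {t : ℕ} (ht : t < k) :
    (Finset.univ.filter fun j : Fin (2 ^ k - 1) => Nat.log 2 ((j : ℕ) + 1) = t).card
      = 2 ^ t := by
  have e1 : (Finset.univ.filter fun j : Fin (2 ^ k - 1) => Nat.log 2 ((j : ℕ) + 1) = t).card
      = ((Finset.range (2 ^ k - 1)).filter fun j => Nat.log 2 (j + 1) = t).card := by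
    rw [Finset.card_filter, Finset.card_filter]
    exact Fin.sum_univ_eq_sum_range (fun j => if Nat.log 2 (j + 1) = t then 1 else 0) _
  rw [e1]
  have h1 : 0 < 2 ^ t := Nat.two_pow_pos t
  have h2 : 2 ^ (t + 1) = 2 * 2 ^ t := by rw [pow_succ]; ring
  have h3 : 2 ^ (t + 1) ≤ 2 ^ k := Nat.pow_le_pow_right (by norm_num) ht
  have e2 : ((Finset.range (2 ^ k - 1)).filter fun j => Nat.log 2 (j + 1) = t)
      = Finset.Ico (2 ^ t - 1) (2 ^ (t + 1) - 1) := by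
    ext j
    have hl : Nat.log 2 (j + 1) = t ↔ 2 ^ t ≤ j + 1 ∧ j + 1 < 2 ^ (t + 1) :=
      Nat.log_eq_iff (Or.inr ⟨one_lt_two, Nat.succ_ne_zero j⟩)
    simp only [Finset.mem_filter, Finset.mem_range, Finset.mem_Ico, hl]
    omega
  rw [e2, Nat.card_Ico]
  omega

lemma norm_L (a : Fin k → ZMod 2) :
    hammingNorm (L k a) = ∑ t ∈ Finset.range k, if sfun a t ≠ 0 then 2 ^ t else 0 := by
  have hmem : ∀ j ∈ (Finset.univ.filter fun j : Fin (2 ^ k - 1) => L k a j ≠ 0),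
      Nat.log 2 ((j : ℕ) + 1) ∈ Finset.range k := by
    intro j _
    have hj := j.isLt
    have hpos : 0 < 2 ^ k := Nat.two_pow_pos k
    rw [Finset.mem_range, Nat.log_lt_iff_lt_pow one_lt_two (Nat.succ_ne_zero _)]
    omega
  have : hammingNorm (L k a)
      = (Finset.univ.filter fun j : Fin (2 ^ k - 1) => L k a j ≠ 0).card := rfl
  rw [this, Finset.card_eq_sum_card_fiberwise hmem]
  refine Finset.sum_congr rfl fun t ht => ?_
  rw [Finset.filter_filter]
  by_cases hs : sfun a t = 0
  · rw [if_neg (by simpa using hs)]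
    rw [Finset.card_eq_zero, Finset.filter_eq_empty_iff]
    rintro j - ⟨hne, hlog⟩
    exact hne (by rw [L_apply, hlog, hs])
  · rw [if_pos hs, ← fiber_card (Finset.mem_range.mp ht)]
    apply congrArg Finset.card
    ext j
    simp only [Finset.mem_filter, Finset.mem_univ, true_and]
    constructor
    · rintro ⟨-, h2⟩; exact h2
    · intro h2
      exact ⟨by rw [L_apply, h2]; exact hs, h2⟩

lemma bits_sum_lt (m : ℕ) (f : ℕ → Bool) :
    (∑ t ∈ Finset.range m, if f t then 2 ^ t else 0) < 2 ^ m := by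
  induction m with
  | zero => simp
  | succ m ih =>
    rw [Finset.sum_range_succ, pow_succ]
    have h : (if f m then 2 ^ m else 0) ≤ 2 ^ m := by split <;> omega
    omega

lemma bits_inj (m : ℕ) (f g : ℕ → Bool)
    (h : (∑ t ∈ Finset.range m, if f t then 2 ^ t else 0)
       = (∑ t ∈ Finset.range m, if g t then 2 ^ t else 0)) :
    ∀ t < m, f t = g t := by
  induction m with
  | zero => intro t ht; omega
  | succ m ih =>
    rw [Finset.sum_range_succ, Finset.sum_range_succ] at h
    have hf := bits_sum_lt m f
    have hg := bits_sum_lt m g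
    have key : f m = g m ∧ (∑ t ∈ Finset.range m, if f t then 2 ^ t else 0)
        = (∑ t ∈ Finset.range m, if g t then 2 ^ t else 0) := by
      cases hfm : f m <;> cases hgm : g m <;> simp only [hfm, hgm] at h <;> simp_all <;> omega
    intro t ht
    rcases Nat.lt_or_ge t m with h' | h'
    · exact ih key.2 t h'
    · have : t = m := by omega
      rw [this]; exact key.1

lemma norm_L' (a : Fin k → ZMod 2) :
    hammingNorm (L k a)
      = ∑ t ∈ Finset.range k, if (decide (sfun a t ≠ 0)) then 2 ^ t else 0 := by
  rw [norm_L]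
  exact Finset.sum_congr rfl fun t _ => if_congr decide_eq_true_iff.symm rfl rfl

lemma norm_lt (a : Fin k → ZMod 2) : hammingNorm (L k a) < 2 ^ k := by
  rw [norm_L']
  exact bits_sum_lt k _

lemma norm_inj {a b : Fin k → ZMod 2}
    (h : hammingNorm (L k a) = hammingNorm (L k b)) : a = b := by
  rw [norm_L', norm_L'] at h
  have hb := bits_inj k _ _ h
  apply eq_of_sfun_eq
  intro t ht
  have h2 : (sfun a t ≠ 0) ↔ (sfun b t ≠ 0) := by
    have := hb t ht
    constructor <;> intro hx <;> simp_all
  revert h2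
  generalize sfun a t = x
  generalize sfun b t = y
  revert x y
  decide

lemma L_inj : Function.Injective (L k) := by
  intro a b h
  apply eq_of_sfun_eq
  intro t ht
  have hpow : 2 ^ t < 2 ^ k := Nat.pow_lt_pow_right one_lt_two ht
  have hposk : 0 < 2 ^ t := Nat.two_pow_pos t
  have hj : 2 ^ t - 1 < 2 ^ k - 1 := by omega
  have hcf := congrFun h (⟨2 ^ t - 1, hj⟩ : Fin (2 ^ k - 1))
  rw [L_apply, L_apply] at hcf
  have hlog : Nat.log 2 ((2 ^ t - 1 : ℕ) + 1) = t := by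
    rw [show (2 ^ t - 1) + 1 = 2 ^ t by omega, Nat.log_pow one_lt_two]
  simpa [hlog] using hcf

lemma exists_norm (w : ℕ) (hw : w < 2 ^ k) : ∃ a, hammingNorm (L k a) = w := by
  have hbij : Function.Bijective
      (fun a : Fin k → ZMod 2 => (⟨hammingNorm (L k a), norm_lt a⟩ : Fin (2 ^ k))) := by
    rw [Fintype.bijective_iff_injective_and_card]
    constructor
    · intro a b hab
      exact norm_inj (congrArg Fin.val hab)
    · simp [Fintype.card_fun]
  obtain ⟨a, ha⟩ := hbij.2 ⟨w, hw⟩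
  exact ⟨a, congrArg Fin.val ha⟩

lemma hn_irrel {n : ℕ} {d1 : ∀ _ : Fin n, DecidableEq (ZMod 2)} (c : Fin n → ZMod 2) :
    @hammingNorm (Fin n) (fun _ => ZMod 2) _ d1 _ c = hammingNorm c := by
  congr!

end Stmt1Aux

/-- For every $k ≥ 1$, the binary code $B_k$ of length $2^k-1$ generated by the
rows $1_1^{(k)},\dots,1_k^{(k)}$ (where $1_i^{(k)}$ has its first $2^i-1$ coordinates equal to
$1$ and the rest $0$) has dimension $k$, and for every $1 ≤ w ≤ 2^k-1$ there is exactly one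
codeword of weight $w$; in particular $S(B_k) = \{1,\dots,2^k-1\}$ and $B_k$ is a strictly
compact MWS code. -/
theorem stmt_1 (k : ℕ) (hk : 1 ≤ k)
    (B : Submodule (ZMod 2) (Fin (2 ^ k - 1) → ZMod 2))
    (hB : B = Submodule.span (ZMod 2)
      (Set.range fun (i : Fin k) => fun (j : Fin (2 ^ k - 1)) =>
        if (j : ℕ) < 2 ^ ((i : ℕ) + 1) - 1 then (1 : ZMod 2) else 0)) :
    Module.finrank (ZMod 2) B = k ∧
    (∀ w : ℕ, 1 ≤ w → w ≤ 2 ^ k - 1 →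
      ∃! c : Fin (2 ^ k - 1) → ZMod 2, c ∈ B ∧ hammingNorm c = w) ∧
    weightSet B = Finset.Icc 1 (2 ^ k - 1) ∧
    IsStrictlyCompactMWS B k := by
  have hBr : B = LinearMap.range (Stmt1Aux.L k) := by
    rw [hB]
    exact (Fintype.range_linearCombination (ZMod 2) (Stmt1Aux.gen k)).symm
  have hpos : 0 < 2 ^ k := Nat.two_pow_pos k
  have h2k : 2 ≤ 2 ^ k := by
    calc 2 = 2 ^ 1 := rfl
    _ ≤ 2 ^ k := Nat.pow_le_pow_right (by norm_num) hk
  have huniq : ∀ w : ℕ, 1 ≤ w → w ≤ 2 ^ k - 1 →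
      ∃! c : Fin (2 ^ k - 1) → ZMod 2, c ∈ B ∧ hammingNorm c = w := by
    intro w h1 h2
    obtain ⟨a, ha⟩ := Stmt1Aux.exists_norm (k := k) w (by omega)
    refine ⟨Stmt1Aux.L k a, ⟨by rw [hBr]; exact ⟨a, rfl⟩, ha⟩, ?_⟩
    rintro c ⟨hc, hcw⟩
    rw [hBr] at hc
    obtain ⟨b, rfl⟩ := hc
    rw [Stmt1Aux.norm_inj (hcw.trans ha.symm)]
  have hL0 : hammingNorm ((0 : Fin (2 ^ k - 1) → ZMod 2)) = 0 := by simp [hammingNorm]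
  have hws : weightSet B = Finset.Icc 1 (2 ^ k - 1) := by
    ext w
    simp only [weightSet, Finset.mem_image, Finset.mem_filter, Finset.mem_univ, true_and,
      Finset.mem_Icc, Stmt1Aux.hn_irrel]
    constructor
    · rintro ⟨c, ⟨hc, hc0⟩, rfl⟩
      rw [hBr] at hc
      obtain ⟨a, rfl⟩ := hc
      have hlt := Stmt1Aux.norm_lt a
      have hne : hammingNorm (Stmt1Aux.L k a) ≠ 0 := by
        intro h0
        apply hc0
        have ha0 : a = 0 := Stmt1Aux.norm_inj (b := 0) (by rw [h0, map_zero, hL0])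
        rw [ha0, map_zero]
      omega
    · rintro ⟨h1, h2⟩
      obtain ⟨c, ⟨hc, hcw⟩, -⟩ := huniq w h1 h2
      refine ⟨c, ⟨hc, ?_⟩, hcw⟩
      intro hc0
      rw [hc0, hL0] at hcw
      omega
  have hcard2 : Fintype.card (ZMod 2) = 2 := ZMod.card 2
  have hqk : qk (Fintype.card (ZMod 2)) k = 2 ^ k - 1 := by
    rw [hcard2]; simp [qk]
  refine ⟨?_, huniq, hws, ⟨⟨?_, 1, ?_, ?_⟩, ?_⟩⟩
  · rw [hBr]
    exact (LinearMap.finrank_range_of_inj Stmt1Aux.L_inj).trans (Module.finrank_fin_fun _)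
  · unfold IsMWS
    rw [hws, hqk, Nat.card_Icc]
    omega
  · rw [hws, Finset.mem_Icc]; omega
  · rw [hws, hqk]
    congr 1
    omega
  · rw [hws, Finset.mem_Icc]; omega
end

section
/- Let q be a prime power, α a primitive element (generator of the multiplicative group) of F_q, and let D_q be the linear code over F_q of length q(q+1)/2 and dimension 2 generated by the two rows of the matrix whose columns consist of, for each i = 1, …, q−1, exactly i copies of the column (1, α^i)^T, together with q copies of the column (1, 0)^T. Then D_q is a [q(q+1)/2, 2, q(q−1)/2]_q code with S(D_q) = {q(q−1)/2, q(q−1)/2 + 1, …, q(q+1)/2}; in particular D_q is a strictly compact MWS code. -/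
open scoped Classical
open Finset

lemma gauss' (m : ℕ) : ∑ i ∈ Finset.Icc 1 m, i = m * (m+1) / 2 := by
  have h : Finset.Icc 1 m = (Finset.range (m+1)).erase 0 := by
    ext x
    simp only [mem_Icc, mem_erase, mem_range]
    omega
  rw [h, Finset.sum_erase (Finset.range (m+1)) (a := 0) rfl, Finset.sum_range_id]
  simp [Nat.mul_comm]

lemma arith1' (q : ℕ) (h : 1 ≤ q) : q*(q-1)/2 + q = q*(q+1)/2 := by
  obtain ⟨m, rfl⟩ := Nat.exists_eq_add_of_le h
  have hA : 2 ∣ (1+m)*m := by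
    have h1 : (1+m)*m = m*(m+1) := by ring
    rw [h1]
    exact (Nat.even_mul_succ_self m).two_dvd
  obtain ⟨k, hk⟩ := hA
  have hB : (1+m)*(1+m+1) = 2*k + 2*(1+m) := by rw [← hk]; ring
  rw [show 1+m-1 = m by omega, hk, hB]
  omega

lemma qk2' (q : ℕ) (h : 2 ≤ q) : ((q ^ 2 - 1) / (q - 1)) = q + 1 := by
  obtain ⟨m, rfl⟩ := Nat.exists_eq_add_of_le h
  have h1 : (2+m)^2 - 1 = (3+m)*(m+1) := by
    have : (3+m)*(m+1) + 1 = (2+m)^2 := by ring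
    omega
  rw [h1, show 2+m-1 = m+1 by omega, Nat.mul_div_cancel _ (by omega)]
  omega

lemma aux {F : Type*} [Field F] [Fintype F] {q n : ℕ}
    (hq : Fintype.card F = q) (hq2 : 2 ≤ q) (hn : n = q * (q + 1) / 2)
    (α : F) (hα : orderOf α = q - 1)
    (col : Fin n → F × F)
    (hcol : ∀ i : ℕ, 1 ≤ i → i ≤ q - 1 →
      (Finset.univ.filter fun j => col j = (1, α ^ i)).card = i)
    (hcol0 : (Finset.univ.filter fun j => col j = ((1 : F), (0 : F))).card = q)
    (D : Submodule F (Fin n → F))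
    (hD : D = Submodule.span F {fun j => (col j).1, fun j => (col j).2}) :
    Module.finrank F D = 2 ∧ weightSet D = Finset.Icc (q * (q - 1) / 2) n := by
  classical
  -- basic facts about α
  have hα1 : α ^ (q - 1) = 1 := by rw [← hα]; exact pow_orderOf_eq_one α
  have hα0 : α ≠ 0 := by
    intro h
    rw [h, zero_pow (by omega)] at hα1
    exact zero_ne_one hα1
  have key : ∀ i j : ℕ, i ≤ j → 1 ≤ i → j ≤ q - 1 → α ^ i = α ^ j → i = j := by
    intro i j hij hi hj he
    have h1 : α ^ i * α ^ (j - i) = α ^ i * 1 := by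
      rw [mul_one, ← pow_add, Nat.add_sub_cancel' hij, he]
    have h2 : α ^ (j - i) = 1 := mul_left_cancel₀ (pow_ne_zero _ hα0) h1
    have h3 := orderOf_dvd_of_pow_eq_one h2
    rw [hα] at h3
    have h4 : j - i = 0 := Nat.eq_zero_of_dvd_of_lt h3 (by omega)
    omega
  have hinj : ∀ i j : ℕ, 1 ≤ i → i ≤ q - 1 → 1 ≤ j → j ≤ q - 1 → α ^ i = α ^ j → i = j := by
    intro i j hi1 hi2 hj1 hj2 he
    rcases le_total i j with h | h
    · exact key i j h hi1 hj2 he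
    · exact (key j i h hj1 hi2 he.symm).symm
  -- structural lemma
  have hNcard : Fintype.card (Fin n) = n := Fintype.card_fin n
  have hgauss : ∑ i ∈ Finset.Icc 1 (q-1), i = (q-1) * q / 2 := by
    rw [gauss' (q-1), show q - 1 + 1 = q by omega]
  have harith : q * (q-1) / 2 + q = n := by rw [hn]; exact arith1' q (by omega)
  have hstruct : ∀ j, col j ∈
      insert ((1:F), (0:F)) ((Finset.Icc 1 (q-1)).image fun i => ((1:F), α ^ i)) := by
    set T : Finset (F × F) :=
      insert ((1:F), (0:F)) ((Finset.Icc 1 (q-1)).image fun i => ((1:F), α ^ i)) with hT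
    have hnotmem : ((1:F), (0:F)) ∉ (Finset.Icc 1 (q-1)).image fun i => ((1:F), α ^ i) := by
      simp only [Finset.mem_image, Finset.mem_Icc, Prod.mk.injEq, not_exists]
      rintro i ⟨hi, _, h2⟩
      exact pow_ne_zero i hα0 h2
    have hcardT : ∑ t ∈ T, (Finset.univ.filter fun j => col j = t).card = n := by
      rw [hT, Finset.sum_insert hnotmem, hcol0,
        Finset.sum_image (by
          intro i hi j hj he
          simp only [Finset.mem_coe, Finset.mem_Icc] at hi hj
          simp only [Prod.mk.injEq] at he
          exact hinj i j hi.1 hi.2 hj.1 hj.2 he.2)]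
      rw [Finset.sum_congr rfl fun i hi => by
        simp only [Finset.mem_Icc] at hi
        exact hcol i hi.1 hi.2]
      rw [hgauss, show (q-1)*q = q*(q-1) from Nat.mul_comm _ _]
      omega
    have hfib : (Finset.univ.filter fun j => col j ∈ T).card
        = ∑ t ∈ T, (Finset.univ.filter fun j => col j = t).card := by
      rw [Finset.card_eq_sum_card_fiberwise
        (f := col) (s := Finset.univ.filter fun j => col j ∈ T) (t := T) (fun x hx => (Finset.mem_filter.1 hx).2)]
      apply Finset.sum_congr rfl
      intro t ht
      congr 1
      ext j
      simp only [Finset.mem_filter, Finset.mem_univ, true_and]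
      exact ⟨fun h => h.2, fun h => ⟨by rw [h]; exact ht, h⟩⟩
    have huniv : (Finset.univ.filter fun j => col j ∈ T) = Finset.univ :=
      Finset.eq_univ_of_card _ (by rw [hfib, hcardT, hNcard])
    intro j
    have hj : j ∈ Finset.univ.filter fun j => col j ∈ T := by
      rw [huniv]; exact Finset.mem_univ j
    exact (Finset.mem_filter.1 hj).2
  have hfst : ∀ j, (col j).1 = 1 := by
    intro j
    rcases Finset.mem_insert.1 (hstruct j) with h | h
    · rw [h]
    · obtain ⟨i, _, hi⟩ := Finset.mem_image.1 h
      rw [← hi]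
  -- counting lemmas on second coordinates
  have hZ : ∀ y : F, (Finset.univ.filter fun j => (col j).2 = y)
      = (Finset.univ.filter fun j => col j = (1, y)) := by
    intro y
    apply Finset.filter_congr
    intro j _
    simp [Prod.ext_iff, hfst j]
  have hZ0 : (Finset.univ.filter fun j => (col j).2 = 0).card = q := by
    rw [hZ]; exact hcol0
  have hZi : ∀ i : ℕ, 1 ≤ i → i ≤ q - 1 →
      (Finset.univ.filter fun j => (col j).2 = α ^ i).card = i := by
    intro i h1 h2; rw [hZ]; exact hcol i h1 h2
  -- surjectivity of powers onto nonzero elements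
  have hsurj : ∀ y : F, y ≠ 0 → ∃ i, 1 ≤ i ∧ i ≤ q - 1 ∧ y = α ^ i := by
    intro y hy
    have hsub : (Finset.Icc 1 (q-1)).image (fun i => α ^ i)
        ⊆ Finset.univ.filter (· ≠ (0:F)) := by
      intro x hx
      simp only [Finset.mem_image, Finset.mem_Icc] at hx
      obtain ⟨i, _, rfl⟩ := hx
      simp only [Finset.mem_filter, Finset.mem_univ, true_and]
      exact pow_ne_zero _ hα0
    have hcards : ((Finset.Icc 1 (q-1)).image (fun i => α ^ i)).card = q - 1 := by
      rw [Finset.card_image_of_injOn, Nat.card_Icc]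
      · omega
      · intro i hi j hj he
        simp only [Finset.mem_coe, Finset.mem_Icc] at hi hj
        exact hinj i j hi.1 hi.2 hj.1 hj.2 he
    have hcardt : (Finset.univ.filter (· ≠ (0:F))).card = q - 1 := by
      rw [Finset.filter_ne', Finset.card_erase_of_mem (Finset.mem_univ _),
        Finset.card_univ, hq]
    have heq : (Finset.Icc 1 (q-1)).image (fun i => α ^ i)
        = Finset.univ.filter (· ≠ (0:F)) :=
      Finset.eq_of_subset_of_card_le hsub (by omega)
    have hy' : y ∈ (Finset.Icc 1 (q-1)).image (fun i => α ^ i) := by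
      rw [heq]
      simp [hy]
    simp only [Finset.mem_image, Finset.mem_Icc] at hy'
    obtain ⟨i, ⟨h1, h2⟩, h3⟩ := hy'
    exact ⟨i, h1, h2, h3.symm⟩
  -- membership in D
  have hmem : ∀ c, c ∈ D ↔ ∃ a b : F, c = fun j => a + b * (col j).2 := by
    intro c
    rw [hD, Submodule.mem_span_pair]
    constructor
    · rintro ⟨a, b, rfl⟩
      exact ⟨a, b, by funext j; simp [hfst j]⟩
    · rintro ⟨a, b, rfl⟩
      exact ⟨a, b, by funext j; simp [hfst j]⟩
  -- Hamming weight via zero count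
  have hnorm : ∀ c : Fin n → F,
      hammingNorm c = n - (Finset.univ.filter fun j => c j = 0).card := by
    intro c
    have h1 : (Finset.univ.filter fun j => c j = 0).card
        + (Finset.univ.filter fun j => ¬ (c j = 0)).card = n := by
      rw [Finset.card_filter_add_card_filter_not, Finset.card_univ, hNcard]
    have h2 : hammingNorm c = (Finset.univ.filter fun j => ¬ (c j = 0)).card := by
      simp [hammingNorm]
    omega
  -- zero count for codewords with b ≠ 0
  have hzero : ∀ a b : F, b ≠ 0 →
      (Finset.univ.filter fun j => a + b * (col j).2 = 0)
        = (Finset.univ.filter fun j => (col j).2 = -a / b) := by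
    intro a b hb
    apply Finset.filter_congr
    intro j _
    rw [eq_div_iff hb]
    constructor
    · intro h
      linear_combination h
    · intro h
      linear_combination h
  have hcount : ∀ a b : F, b ≠ 0 →
      (Finset.univ.filter fun j => a + b * (col j).2 = 0).card ≤ q := by
    intro a b hb
    rw [hzero a b hb]
    by_cases hv : -a / b = 0
    · rw [hv, hZ0]
    · obtain ⟨i, h1, h2, h3⟩ := hsurj _ hv
      rw [h3, hZi i h1 h2]
      omega
  -- the weight set
  have hws : weightSet D = Finset.Icc (q * (q - 1) / 2) n := by
    ext w
    simp only [weightSet, Finset.mem_image, Finset.mem_filter, Finset.mem_univ, true_and,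
      Finset.mem_Icc]
    constructor
    · rintro ⟨c, ⟨hcD, hc0⟩, rfl⟩
      obtain ⟨a, b, rfl⟩ := (hmem c).1 hcD
      rw [hnorm]
      refine ⟨?_, Nat.sub_le _ _⟩
      by_cases hb : b = 0
      · subst hb
        have ha : a ≠ 0 := by
          intro h
          exact hc0 (by funext j; simp [h])
        have hempty : (Finset.univ.filter fun j => a + 0 * (col j).2 = 0) = ∅ := by
          apply Finset.filter_false_of_mem
          intro j _
          simp [ha]
        rw [hempty]
        simp
        omega
      · have := hcount a b hb
        omega
    · rintro ⟨hwl, hwu⟩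
      have hn0 : 0 < n := by omega
      by_cases h0 : w = n
      · refine ⟨fun j => 1 + 0 * (col j).2, ⟨(hmem _).2 ⟨1, 0, rfl⟩, ?_⟩, ?_⟩
        · intro h
          have := congrFun h ⟨0, hn0⟩
          simp at this
        · rw [hnorm]
          have hempty : (Finset.univ.filter fun j => (1:F) + 0 * (col j).2 = 0) = ∅ := by
            apply Finset.filter_false_of_mem
            intro j _
            simp
          rw [hempty]
          simp
          omega
      by_cases hq' : w = n - q
      · refine ⟨fun j => 0 + 1 * (col j).2, ⟨(hmem _).2 ⟨0, 1, rfl⟩, ?_⟩, ?_⟩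
        · -- nonzero: some coordinate has (col j).2 = α^1 ≠ 0
          have h1 : (Finset.univ.filter fun j => (col j).2 = α ^ 1).card = 1 :=
            hZi 1 le_rfl (by omega)
          have h2 : (Finset.univ.filter fun j => (col j).2 = α ^ 1).Nonempty := by
            rw [← Finset.card_pos, h1]; omega
          obtain ⟨j, hj⟩ := h2
          simp only [Finset.mem_filter] at hj
          intro h
          have := congrFun h j
          simp only [Pi.zero_apply, zero_add, one_mul] at this
          rw [hj.2] at this
          exact pow_ne_zero 1 hα0 this
        · rw [hnorm]
          have he : (Finset.univ.filter fun j => (0:F) + 1 * (col j).2 = 0)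
              = (Finset.univ.filter fun j => (col j).2 = 0) := by
            apply Finset.filter_congr
            intro j _
            simp
          rw [he, hZ0, hq']
      · -- 1 ≤ n - w ≤ q - 1 case
        set t := n - w with htdef
        have ht1 : 1 ≤ t := by omega
        have ht2 : t ≤ q - 1 := by omega
        refine ⟨fun j => (-(α ^ t)) + 1 * (col j).2, ⟨(hmem _).2 ⟨-(α ^ t), 1, rfl⟩, ?_⟩, ?_⟩
        · -- nonzero: at a coordinate with (col j).2 = 0
          have h2 : (Finset.univ.filter fun j => (col j).2 = 0).Nonempty := by
            rw [← Finset.card_pos, hZ0]; omega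
          obtain ⟨j, hj⟩ := h2
          simp only [Finset.mem_filter] at hj
          intro h
          have := congrFun h j
          rw [hj.2] at this
          simp only [Pi.zero_apply, mul_zero, add_zero] at this
          exact pow_ne_zero t hα0 (neg_eq_zero.1 this)
        · rw [hnorm]
          have he : (Finset.univ.filter fun j => (-(α ^ t)) + 1 * (col j).2 = 0)
              = (Finset.univ.filter fun j => (col j).2 = α ^ t) := by
            apply Finset.filter_congr
            intro j _
            constructor
            · intro h
              linear_combination h
            · intro h
              rw [h]
              ring
          rw [he, hZi t ht1 ht2]
          omega
  -- linear independence and rank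
  have hli : LinearIndependent F ![fun j => (col j).1, fun j => (col j).2] := by
    rw [LinearIndependent.pair_iff]
    intro s t hst
    obtain ⟨j0, hj0⟩ : (Finset.univ.filter fun j => (col j).2 = 0).Nonempty := by
      rw [← Finset.card_pos, hZ0]; omega
    obtain ⟨j1, hj1⟩ : (Finset.univ.filter fun j => (col j).2 = α ^ 1).Nonempty := by
      rw [← Finset.card_pos, hZi 1 le_rfl (by omega)]; omega
    simp only [Finset.mem_filter] at hj0 hj1
    have h0 := congrFun hst j0
    have h1 := congrFun hst j1
    simp only [Pi.add_apply, Pi.smul_apply, smul_eq_mul, Pi.zero_apply] at h0 h1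
    rw [hfst j0, hj0.2] at h0
    rw [hfst j1, hj1.2] at h1
    have hs : s = 0 := by simpa using h0
    refine ⟨hs, ?_⟩
    rw [hs] at h1
    simp only [zero_mul, zero_add, pow_one] at h1
    rcases mul_eq_zero.1 h1 with h | h
    · exact h
    · exact absurd h hα0
  have hrank : Module.finrank F D = 2 := by
    rw [hD]
    have h := finrank_span_eq_card (R := F) hli
    rw [show Set.range ![fun j => (col j).1, fun j => (col j).2]
      = {fun j => (col j).1, fun j => (col j).2} from by
        simp only [Matrix.range_cons, Matrix.range_empty, Set.union_empty,
          Set.singleton_union]] at h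
    rw [h, Fintype.card_fin]
  exact ⟨hrank, hws⟩

/-- Let $q$ be a prime power, $α$ a primitive element of $F_q$, and $D_q$ the
code of length $q(q+1)/2$ generated by the two rows of the matrix whose columns are, for
each $i = 1,\dots,q-1$, exactly $i$ copies of $(1, α^i)^T$, together with $q$ copies of
$(1,0)^T$. Then $D_q$ is a $[q(q+1)/2, 2, q(q-1)/2]_q$ code with
$S(D_q) = \{q(q-1)/2, \dots, q(q+1)/2\}$; in particular $D_q$ is a strictly compact MWS code. -/
theorem stmt_2 {F : Type*} [Field F] [Fintype F] (α : F)
    (hα : orderOf α = Fintype.card F - 1)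
    (col : Fin (Fintype.card F * (Fintype.card F + 1) / 2) → F × F)
    (hcol : ∀ i : ℕ, 1 ≤ i → i ≤ Fintype.card F - 1 →
      (Finset.univ.filter fun j => col j = (1, α ^ i)).card = i)
    (hcol0 : (Finset.univ.filter fun j => col j = ((1 : F), (0 : F))).card = Fintype.card F)
    (D : Submodule F (Fin (Fintype.card F * (Fintype.card F + 1) / 2) → F))
    (hD : D = Submodule.span F {fun j => (col j).1, fun j => (col j).2}) :
    Module.finrank F D = 2 ∧
    weightSet D = Finset.Icc (Fintype.card F * (Fintype.card F - 1) / 2)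
      (Fintype.card F * (Fintype.card F + 1) / 2) ∧
    (∀ w ∈ weightSet D, Fintype.card F * (Fintype.card F - 1) / 2 ≤ w) ∧
    IsStrictlyCompactMWS D 2 := by
  classical
  have hq2 : 2 ≤ Fintype.card F := Fintype.one_lt_card
  obtain ⟨hrank, hws⟩ := aux rfl hq2 rfl α hα col hcol hcol0 D hD
  have hqk : qk (Fintype.card F) 2 = Fintype.card F + 1 := qk2' _ hq2
  have harith : Fintype.card F * (Fintype.card F - 1) / 2 + Fintype.card F
      = Fintype.card F * (Fintype.card F + 1) / 2 := arith1' _ (by omega)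
  refine ⟨hrank, hws, ?_, ⟨?_, ?_⟩, ?_⟩
  · intro w hw
    rw [hws] at hw
    exact (Finset.mem_Icc.1 hw).1
  · unfold IsMWS
    rw [hws, hqk, Nat.card_Icc]
    omega
  · refine ⟨Fintype.card F * (Fintype.card F - 1) / 2, ?_, ?_⟩
    · rw [hws, Finset.mem_Icc]
      omega
    · rw [hws, hqk]
      congr 1
      omega
  · rw [hws, Finset.mem_Icc]
    omega
end

section
/- Let C be a non-degenerate [n,k]_q MWS code. Then 2·n·q_{k−1} = q·q_{k−1}·q_k + 2·Δ(C); that is, n = (q/2)·q_k + Δ(C)/q_{k−1}. -/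
open scoped Classical
open Finset

section Aux
variable {F : Type*} [Field F] [Fintype F] {n : ℕ}

lemma card_filter_mem (C : Submodule F (Fin n → F)) :
    #(univ.filter fun c : Fin n → F => c ∈ C) = Fintype.card F ^ Module.finrank F C := by
  rw [← Fintype.card_subtype]
  exact Module.card_eq_pow_finrank

lemma card_zero_coord (C : Submodule F (Fin n → F)) {m : ℕ}
    (hdim : Module.finrank F C = m + 1) (i : Fin n) (hi : ∃ c ∈ C, c i ≠ 0) :
    #(univ.filter fun c : Fin n → F => c ∈ C ∧ c i = 0) = Fintype.card F ^ m := by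
  set φ : C →ₗ[F] F := (LinearMap.proj i).comp C.subtype with hφ
  have hsurj : Function.Surjective φ := by
    obtain ⟨c, hc, hci⟩ := hi
    intro a
    refine ⟨⟨(a * (c i)⁻¹) • c, C.smul_mem _ hc⟩, ?_⟩
    simp [φ, mul_assoc, inv_mul_cancel₀ hci]
  have hker : Module.finrank F (LinearMap.ker φ) = m := by
    have h := φ.finrank_range_add_finrank_ker
    rw [LinearMap.range_eq_top.mpr hsurj, finrank_top, Module.finrank_self, hdim] at h
    omega
  rw [← Fintype.card_subtype]
  have e : {c : Fin n → F // c ∈ C ∧ c i = 0} ≃ LinearMap.ker φ :=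
    { toFun := fun c => ⟨⟨c.1, c.2.1⟩, by simp [LinearMap.mem_ker, φ, c.2.2]⟩
      invFun := fun x => ⟨x.1.1, x.1.2, by
        have h2 := x.2
        rw [LinearMap.mem_ker] at h2
        exact h2⟩
      left_inv := fun c => rfl
      right_inv := fun x => rfl }
  rw [Fintype.card_congr e, Module.card_eq_pow_finrank (K := F), hker]

lemma sum_norm_total (C : Submodule F (Fin n → F)) {m : ℕ}
    (hdim : Module.finrank F C = m + 1) (hnd : Nondeg C) :
    ∑ c ∈ univ.filter (fun c : Fin n → F => c ∈ C), hammingNorm c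
      = n * (Fintype.card F ^ (m + 1) - Fintype.card F ^ m) := by
  set q := Fintype.card F
  have key : ∀ i : Fin n,
      #(univ.filter fun c : Fin n → F => c ∈ C ∧ c i ≠ 0) = q ^ (m + 1) - q ^ m := by
    intro i
    have h0 := card_zero_coord C hdim i (hnd i)
    have hC := card_filter_mem C
    rw [hdim] at hC
    have hsplit := card_filter_add_card_filter_not
      (s := univ.filter fun c : Fin n → F => c ∈ C) (p := fun c => c i = 0)
    rw [filter_filter, filter_filter] at hsplit
    simp only [ne_eq] at h0 hsplit ⊢
    rw [h0, hC] at hsplit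
    exact Nat.eq_sub_of_add_eq' hsplit
  calc ∑ c ∈ univ.filter (fun c : Fin n → F => c ∈ C), hammingNorm c
      = ∑ c ∈ univ.filter (fun c : Fin n → F => c ∈ C),
          ∑ i : Fin n, if c i ≠ 0 then 1 else 0 := by
        refine sum_congr rfl fun c _ => ?_
        rw [hammingNorm, card_filter]
    _ = ∑ i : Fin n, ∑ c ∈ univ.filter (fun c : Fin n → F => c ∈ C),
          if c i ≠ 0 then 1 else 0 := sum_comm
    _ = ∑ i : Fin n, (q ^ (m + 1) - q ^ m) := by
        refine sum_congr rfl fun i _ => ?_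
        rw [← card_filter, filter_filter, key i]
    _ = n * (q ^ (m + 1) - q ^ m) := by
        rw [sum_const, card_univ, Fintype.card_fin, smul_eq_mul]

lemma sum_weightSet (C : Submodule F (Fin n → F)) {m : ℕ}
    (hdim : Module.finrank F C = m + 1) (hnd : Nondeg C)
    (hMWS : IsMWS C (m + 1)) :
    (Fintype.card F - 1) * ∑ w ∈ weightSet C, w
      = n * (Fintype.card F ^ (m + 1) - Fintype.card F ^ m) := by
  set q := Fintype.card F with hqdef
  have hq : 1 < q := Fintype.one_lt_card
  set D : Finset (Fin n → F) := univ.filter fun c : Fin n → F => c ∈ C ∧ c ≠ 0 with hD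
  have hws : weightSet C = D.image (fun c => hammingNorm c) := rfl
  have hC : #(univ.filter fun c : Fin n → F => c ∈ C) = q ^ (m + 1) := by
    rw [card_filter_mem C, hdim]
  have hzero : (univ.filter fun c : Fin n → F => c ∈ C ∧ c = 0) = {0} := by
    ext c
    simp only [mem_filter, mem_univ, true_and, mem_singleton]
    exact ⟨fun h => h.2, fun h => ⟨h ▸ C.zero_mem, h⟩⟩
  have hDcard : #D = q ^ (m + 1) - 1 := by
    have hsplit := card_filter_add_card_filter_not
      (s := univ.filter fun c : Fin n → F => c ∈ C) (p := fun c => c = 0)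
    rw [filter_filter, filter_filter, hzero, hC] at hsplit
    rw [hD]
    simp only [ne_eq]
    simpa using Nat.eq_sub_of_add_eq' hsplit
  have hA : (q - 1) * qk q (m + 1) = q ^ (m + 1) - 1 :=
    Nat.mul_div_cancel' (by simpa using Nat.sub_dvd_pow_sub_pow q 1 (m + 1))
  have hfib : ∀ w ∈ weightSet C, q - 1 ≤ #(D.filter fun c => hammingNorm c = w) := by
    intro w hw
    rw [hws] at hw
    obtain ⟨c, hcD, hcw⟩ := mem_image.mp hw
    have hcC : c ∈ C := ((mem_filter.mp hcD).2).1
    have hc0 : c ≠ 0 := ((mem_filter.mp hcD).2).2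
    have hcard : #(univ.filter fun a : F => a ≠ 0) = q - 1 := by
      rw [filter_ne', card_erase_of_mem (mem_univ 0), card_univ]
    rw [← hcard]
    apply card_le_card_of_injOn (fun a => a • c)
    · intro a ha
      have ha0 : a ≠ 0 := (mem_filter.mp ha).2
      have hreg : ∀ i : Fin n, IsSMulRegular F a := fun _ x y hxy =>
        mul_left_cancel₀ ha0 (by simpa [smul_eq_mul] using hxy)
      refine mem_filter.mpr ⟨mem_filter.mpr ⟨mem_univ _, C.smul_mem a hcC, smul_ne_zero ha0 hc0⟩, ?_⟩
      rw [hammingNorm_smul hreg, hcw]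
    · intro a _ b _ hab
      exact smul_left_injective F hc0 hab
  have hsumfib : ∑ w ∈ weightSet C, #(D.filter fun c => hammingNorm c = w) = #D := by
    rw [hws]; exact (card_eq_sum_card_image (fun c => hammingNorm c) D).symm
  have hconst : ∑ _w ∈ weightSet C, (q - 1) = ∑ w ∈ weightSet C, #(D.filter fun c => hammingNorm c = w) := by
    rw [sum_const, smul_eq_mul, hsumfib, hDcard, hMWS, ← hqdef, mul_comm, hA]
  have hfib' : ∀ w ∈ weightSet C, #(D.filter fun c => hammingNorm c = w) = q - 1 :=
    fun w hw => ((sum_eq_sum_iff_of_le hfib).mp hconst w hw).symm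
  have h1 : ∑ c ∈ D, hammingNorm c = ∑ w ∈ weightSet C, (q - 1) * w := by
    rw [← sum_fiberwise_of_maps_to' (g := fun c => hammingNorm c) (t := weightSet C)
      (fun c hc => hws ▸ mem_image_of_mem _ hc) (fun w => w)]
    refine sum_congr rfl fun w hw => ?_
    rw [sum_const, smul_eq_mul, hfib' w hw]
  have h2 : ∑ c ∈ univ.filter (fun c : Fin n → F => c ∈ C), hammingNorm c
      = ∑ c ∈ D, hammingNorm c := by
    have hsplit := sum_filter_add_sum_filter_not
      (univ.filter fun c : Fin n → F => c ∈ C) (fun c => c ≠ 0) (fun c => hammingNorm c)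
    rw [filter_filter, filter_filter] at hsplit
    have hz : ∑ c ∈ univ.filter (fun c : Fin n → F => c ∈ C ∧ ¬c ≠ 0), hammingNorm c = 0 := by
      refine sum_eq_zero fun c hc => ?_
      have : c = 0 := not_not.mp (mem_filter.mp hc).2.2
      rw [this, hammingNorm_zero]
    rw [hD]
    simp only [ne_eq] at hsplit hz ⊢
    omega
  rw [mul_sum]
  calc ∑ w ∈ weightSet C, (q - 1) * w = ∑ c ∈ D, hammingNorm c := h1.symm
    _ = _ := by rw [← h2, sum_norm_total C hdim hnd]

end Aux

/-- For a non-degenerate $[n,k]_q$ MWS code $C$,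
$2n·q_{k-1} = q·q_{k-1}·q_k + 2Δ(C)$, i.e. $n = (q/2)q_k + Δ(C)/q_{k-1}$. -/
theorem stmt_4 {F : Type*} [Field F] [Fintype F] {n k : ℕ}
    (C : Submodule F (Fin n → F))
    (hdim : Module.finrank F C = k)
    (hnd : Nondeg C)
    (hMWS : IsMWS C k) :
    2 * (n : ℤ) * qk (Fintype.card F) (k - 1) =
      (Fintype.card F : ℤ) * qk (Fintype.card F) (k - 1) * qk (Fintype.card F) k
        + 2 * spread C k := by
  rcases k with _ | m
  · have hq0 : qk (Fintype.card F) 0 = 0 := by simp [qk]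
    have hempty : weightSet C = ∅ := by
      have h := hMWS
      rw [IsMWS, hq0] at h
      exact card_eq_zero.mp h
    simp [spread, hq0, hempty]
  · set q := Fintype.card F with hqdef
    have hq : 1 < q := Fintype.one_lt_card
    have hpow1 : 1 ≤ q ^ (m + 1) := Nat.one_le_pow _ _ (by omega)
    have hpow2 : 1 ≤ q ^ m := Nat.one_le_pow _ _ (by omega)
    have hpowle : q ^ m ≤ q ^ (m + 1) := Nat.pow_le_pow_right (by omega) (by omega)
    set Q := qk q (m + 1) with hQdef
    set Q' := qk q m with hQ'def
    have hA : (q - 1) * Q = q ^ (m + 1) - 1 :=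
      Nat.mul_div_cancel' (by simpa using Nat.sub_dvd_pow_sub_pow q 1 (m + 1))
    have hB : (q - 1) * Q' = q ^ m - 1 :=
      Nat.mul_div_cancel' (by simpa using Nat.sub_dvd_pow_sub_pow q 1 m)
    have hQpos : 1 ≤ Q := by
      rcases Nat.eq_zero_or_pos Q with h | h
      · rw [h, mul_zero] at hA
        have : 2 ≤ q ^ (m + 1) := le_trans hq (Nat.le_self_pow (by omega) q)
        omega
      · exact h
    have hT : 2 * (Q * (Q - 1) / 2) = Q * (Q - 1) := by
      apply Nat.mul_div_cancel'
      have he : Even ((Q - 1) * (Q - 1 + 1)) := Nat.even_mul_succ_self _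
      rw [Nat.sub_add_cancel hQpos, mul_comm] at he
      exact he.two_dvd
    have hkey := sum_weightSet C hdim hnd hMWS
    have hq1 : ((q : ℤ) - 1) ≠ 0 := by
      have : (1 : ℤ) < q := by exact_mod_cast hq
      omega
    have zA : ((q : ℤ) - 1) * Q = (q : ℤ) ^ (m + 1) - 1 := by
      zify [hq.le, hpow1] at hA
      exact hA
    have zB : ((q : ℤ) - 1) * Q' = (q : ℤ) ^ m - 1 := by
      zify [hq.le, hpow2] at hB
      exact hB
    have zS : ((q : ℤ) - 1) * (∑ w ∈ weightSet C, (w : ℤ)) = n * ((q : ℤ) ^ (m + 1) - q ^ m) := by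
      rw [← hqdef] at hkey
      zify [hq.le, hpowle] at hkey
      linarith [hkey]
    have zT : 2 * ((Q * (Q - 1) / 2 : ℕ) : ℤ) = (Q : ℤ) * ((Q : ℤ) - 1) := by
      have h2 := congrArg (fun t : ℕ => (t : ℤ)) hT
      simp only [Nat.cast_mul, Nat.cast_ofNat, Nat.cast_sub hQpos, Nat.cast_one] at h2
      exact h2
    have hQe : (Q : ℤ) = Q' + (q : ℤ) ^ m :=
      mul_left_cancel₀ hq1 (by linear_combination zA - zB)
    have hQ1 : (Q : ℤ) - 1 = (q : ℤ) * Q' :=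
      mul_left_cancel₀ hq1 (by linear_combination zA - (q : ℤ) * zB)
    have hSe : (∑ w ∈ weightSet C, (w : ℤ)) = n * (q : ℤ) ^ m :=
      mul_left_cancel₀ hq1 (by linear_combination zS)
    rw [spread]
    simp only [Nat.add_sub_cancel, ← hqdef, ← hQdef, ← hQ'def]
    linear_combination (Q : ℤ) * hQ1 + zT - 2 * (n : ℤ) * hQe + 2 * hSe
end

section
/- Let C be a non-degenerate [n,k]_q MWS code and suppose q·k is even. Then q_{k−1} divides Δ(C); that is, Δ(C) = h·q_{k−1} for some non-negative integer h. -/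
open scoped Classical
open Finset

/- ### Auxiliary lemmas -/

lemma myGeom (q : ℕ) (hq : 1 ≤ q) (k : ℕ) :
    (q - 1) * ∑ i ∈ Finset.range k, q ^ i = q ^ k - 1 := by
  induction k with
  | zero => simp
  | succ m ih =>
    have h1 : 1 ≤ q ^ m := Nat.one_le_pow _ _ hq
    have h3 : q ^ (m + 1) = q * q ^ m := by ring
    have h4 : (q - 1) * q ^ m = q * q ^ m - q ^ m := by
      rw [Nat.sub_mul, one_mul]
    have h5 : q ^ m ≤ q * q ^ m := Nat.le_mul_of_pos_left _ (by omega)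
    rw [Finset.sum_range_succ, Nat.mul_add, ih, h4, h3]
    omega

lemma qk_eq_sum (q k : ℕ) (hq : 2 ≤ q) : qk q k = ∑ i ∈ Finset.range k, q ^ i := by
  rw [qk, ← myGeom q (by omega) k, Nat.mul_div_cancel_left _ (by omega : 0 < q - 1)]

lemma qk_mul (q k : ℕ) (hq : 2 ≤ q) : (q - 1) * qk q k = q ^ k - 1 := by
  rw [qk_eq_sum q k hq]; exact myGeom q (by omega) k

lemma qk_succ (q k : ℕ) (hq : 2 ≤ q) : qk q (k + 1) = q * qk q k + 1 := by
  rw [qk_eq_sum _ _ hq, qk_eq_sum _ _ hq, Finset.sum_range_succ', Finset.mul_sum]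
  simp [pow_succ, mul_comm]

lemma qk_split (q k : ℕ) (hq : 2 ≤ q) : qk q (k + 1) = qk q k + q ^ k := by
  rw [qk_eq_sum _ _ hq, qk_eq_sum _ _ hq, Finset.sum_range_succ]

lemma even_qk (q : ℕ) (hq : 2 ≤ q) (hodd : Odd q) {k : ℕ} (hk : Even k) : Even (qk q k) := by
  obtain ⟨m, rfl⟩ := hk
  induction m with
  | zero => simp [qk]
  | succ t ih =>
    have heq : t + 1 + (t + 1) = t + t + 1 + 1 := by omega
    rw [heq, qk_succ _ _ hq, qk_succ _ _ hq]
    exact ((hodd.mul ((ih.mul_left q).add_one)).add_one)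

lemma even_q_qk (q k : ℕ) (hq : 2 ≤ q) (h : Even (q * k)) : Even (q * qk q k) := by
  rcases Nat.even_mul.mp h with hq' | hk
  · exact hq'.mul_right _
  · rcases Nat.even_or_odd q with hqe | hqo
    · exact hqe.mul_right _
    · exact (even_qk q hq hqo hk).mul_left _

lemma sum_ge_sum_range : ∀ (m : ℕ) (V : Finset ℕ), V.card = m →
    ∑ i ∈ Finset.range m, i ≤ ∑ v ∈ V, v := by
  intro m
  induction m with
  | zero => simp
  | succ m ih =>
    intro V hc
    have hne : V.Nonempty := Finset.card_pos.mp (by omega)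
    have hMm : V.max' hne ∈ V := V.max'_mem hne
    have hcard : V.card ≤ V.max' hne + 1 := by
      have hsub : V ⊆ Finset.range (V.max' hne + 1) := fun v hv =>
        Finset.mem_range.mpr (Nat.lt_succ_of_le (V.le_max' v hv))
      simpa using Finset.card_le_card hsub
    have herase : (V.erase (V.max' hne)).card = m := by
      rw [Finset.card_erase_of_mem hMm, hc]; omega
    have h2 := ih (V.erase (V.max' hne)) herase
    have hsum : ∑ v ∈ V, v = V.max' hne + ∑ v ∈ V.erase (V.max' hne), v :=
      (Finset.add_sum_erase _ _ hMm).symm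
    rw [Finset.sum_range_succ]
    omega

lemma hammingNorm_smul_ne {F : Type*} [Field F] {n : ℕ} {α : F} (hα : α ≠ 0) (c : Fin n → F) :
    hammingNorm (α • c) = hammingNorm c := by
  classical
  unfold hammingNorm
  congr 1
  ext i
  simp [hα]

/-- Key lemma: the sum of the distinct weights of a nondegenerate MWS code. -/
lemma sum_weights_eq {F : Type*} [Field F] [Fintype F] {n k : ℕ}
    (C : Submodule F (Fin n → F))
    (hdim : Module.finrank F C = k) (hk1 : 1 ≤ k)
    (hnd : Nondeg C)
    (hMWS : IsMWS C k) :
    ∑ w ∈ weightSet C, w = n * (Fintype.card F) ^ (k - 1) := by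
  classical
  set q := Fintype.card F with hqdef
  have hq : 2 ≤ q := Fintype.one_lt_card
  have hcardC : Fintype.card C = q ^ k := by
    rw [Module.card_eq_pow_finrank (K := F) (V := C), hdim]
  have h0 : (Finset.univ.filter fun c : Fin n → F => c ∈ C).card = q ^ k := by
    rw [← hcardC]
    exact (Fintype.card_subtype _).symm
  have hT : (Finset.univ.filter fun c : Fin n → F => c ∈ C ∧ c ≠ 0)
      = (Finset.univ.filter fun c : Fin n → F => c ∈ C).erase 0 := by
    ext c
    simp only [Finset.mem_filter, Finset.mem_erase, Finset.mem_univ, true_and]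
    tauto
  have hTcard : (Finset.univ.filter fun c : Fin n → F => c ∈ C ∧ c ≠ 0).card = q ^ k - 1 := by
    rw [hT, Finset.card_erase_of_mem (by simp [C.zero_mem]), h0]
  -- per coordinate count
  have hcoord : ∀ i : Fin n,
      (Finset.univ.filter fun c : Fin n → F => c ∈ C ∧ c i ≠ 0).card = q ^ k - q ^ (k - 1) := by
    intro i
    set φ : C →ₗ[F] F := (LinearMap.proj i).comp C.subtype with hφ
    have hsurj : Function.Surjective φ := by
      obtain ⟨c, hcC, hci⟩ := hnd i
      intro a
      refine ⟨(a * (c i)⁻¹) • ⟨c, hcC⟩, ?_⟩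
      simp only [hφ, LinearMap.comp_apply, LinearMap.proj_apply, map_smul]
      show (a * (c i)⁻¹) • ((⟨c, hcC⟩ : C) : Fin n → F) i = a
      simp only [Pi.smul_apply, smul_eq_mul]
      field_simp
    have hrank := LinearMap.finrank_range_add_finrank_ker φ
    have hrange : LinearMap.range φ = ⊤ := LinearMap.range_eq_top.mpr hsurj
    rw [hrange, finrank_top, hdim, Module.finrank_self] at hrank
    have hkerrank : Module.finrank F (LinearMap.ker φ) = k - 1 := by omega
    have hkercard : Fintype.card (LinearMap.ker φ) = q ^ (k - 1) := by
      rw [Module.card_eq_pow_finrank (K := F) (V := LinearMap.ker φ), hkerrank]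
    have hker0 : (Finset.univ.filter fun c : Fin n → F => c ∈ C ∧ c i = 0).card
        = q ^ (k - 1) := by
      rw [← hkercard, ← Fintype.card_subtype]
      refine Fintype.card_congr ?_
      refine ⟨fun x => ⟨⟨x.1, x.2.1⟩, ?_⟩, fun y => ⟨y.1.1, y.1.2, ?_⟩, fun x => rfl, fun y => rfl⟩
      · exact LinearMap.mem_ker.mpr x.2.2
      · exact LinearMap.mem_ker.mp y.2
    have hsplit : (Finset.univ.filter fun c : Fin n → F => c ∈ C ∧ c i ≠ 0).card
        + (Finset.univ.filter fun c : Fin n → F => c ∈ C ∧ c i = 0).card = q ^ k := by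
      rw [← h0]
      have hunion : (Finset.univ.filter fun c : Fin n → F => c ∈ C)
          = (Finset.univ.filter fun c : Fin n → F => c ∈ C ∧ c i ≠ 0)
            ∪ (Finset.univ.filter fun c : Fin n → F => c ∈ C ∧ c i = 0) := by
        ext c
        simp only [Finset.mem_filter, Finset.mem_union, Finset.mem_univ, true_and]
        tauto
      have hdisj : Disjoint (Finset.univ.filter fun c : Fin n → F => c ∈ C ∧ c i ≠ 0)
          (Finset.univ.filter fun c : Fin n → F => c ∈ C ∧ c i = 0) := by
        rw [Finset.disjoint_left]
        intro c h1 h2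
        simp only [Finset.mem_filter] at h1 h2
        exact h1.2.2 h2.2.2
      rw [hunion, Finset.card_union_of_disjoint hdisj]
    rw [← hker0]
    exact Nat.eq_sub_of_add_eq hsplit
  -- sum over all nonzero codewords
  have hnormdef : ∀ c : Fin n → F, hammingNorm c = ∑ i : Fin n, if c i ≠ 0 then 1 else 0 := by
    intro c
    rw [hammingNorm, Finset.card_filter]
  have hsumT : ∑ c ∈ (Finset.univ.filter fun c : Fin n → F => c ∈ C ∧ c ≠ 0), hammingNorm c
      = n * (q ^ k - q ^ (k - 1)) := by
    calc ∑ c ∈ (Finset.univ.filter fun c : Fin n → F => c ∈ C ∧ c ≠ 0), hammingNorm c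
        = ∑ c ∈ (Finset.univ.filter fun c : Fin n → F => c ∈ C ∧ c ≠ 0),
            ∑ i : Fin n, if c i ≠ 0 then 1 else 0 := by
          exact Finset.sum_congr rfl fun c _ => hnormdef c
      _ = ∑ i : Fin n, ∑ c ∈ (Finset.univ.filter fun c : Fin n → F => c ∈ C ∧ c ≠ 0),
            (if c i ≠ 0 then 1 else 0) := Finset.sum_comm
      _ = ∑ i : Fin n, ((Finset.univ.filter fun c : Fin n → F => c ∈ C ∧ c ≠ 0).filter
            (fun c => c i ≠ 0)).card := by
          exact Finset.sum_congr rfl fun i _ => (Finset.card_filter _ _).symm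
      _ = ∑ i : Fin n, (Finset.univ.filter fun c : Fin n → F => c ∈ C ∧ c i ≠ 0).card := by
          refine Finset.sum_congr rfl fun i _ => ?_
          congr 1
          ext c
          simp only [Finset.mem_filter, Finset.mem_univ, true_and]
          constructor
          · rintro ⟨⟨h1, h2⟩, h3⟩; exact ⟨h1, h3⟩
          · rintro ⟨h1, h3⟩
            refine ⟨⟨h1, fun hc => h3 ?_⟩, h3⟩
            rw [hc]; rfl
      _ = ∑ i : Fin n, (q ^ k - q ^ (k - 1)) :=
          Finset.sum_congr rfl fun i _ => hcoord i
      _ = n * (q ^ k - q ^ (k - 1)) := by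
          rw [Finset.sum_const, Finset.card_univ, Fintype.card_fin, smul_eq_mul]
  -- fibers of the weight map all have size at least q - 1
  have hfib_ge : ∀ w ∈ weightSet C,
      q - 1 ≤ ((Finset.univ.filter fun c : Fin n → F => c ∈ C ∧ c ≠ 0).filter
        fun c => hammingNorm c = w).card := by
    intro w hw
    obtain ⟨c, hcT, hcw⟩ := Finset.mem_image.mp hw
    have hc : c ∈ C ∧ c ≠ 0 := (Finset.mem_filter.mp hcT).2
    have hcardne : ((Finset.univ.filter fun α : F => α ≠ 0)).card = q - 1 := by
      rw [Finset.filter_ne', Finset.card_erase_of_mem (Finset.mem_univ 0), Finset.card_univ]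
    rw [← hcardne]
    refine Finset.card_le_card_of_injOn (fun α => α • c) ?_ ?_
    · intro α hα
      simp only [Finset.mem_coe, Finset.mem_filter, Finset.mem_univ, true_and] at hα ⊢
      refine ⟨⟨C.smul_mem α hc.1, ?_⟩, by rw [hammingNorm_smul_ne hα]; exact hcw⟩
      exact smul_ne_zero hα hc.2
    · intro α hα β hβ hαβ
      exact smul_left_injective F hc.2 hαβ
  -- total count of fibers
  have hfibsum : ∑ w ∈ weightSet C,
      ((Finset.univ.filter fun c : Fin n → F => c ∈ C ∧ c ≠ 0).filter
        fun c => hammingNorm c = w).card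
      = (Finset.univ.filter fun c : Fin n → F => c ∈ C ∧ c ≠ 0).card :=
    (Finset.card_eq_sum_card_image _ _).symm
  -- each fiber has size exactly q - 1
  have hfib : ∀ w ∈ weightSet C,
      ((Finset.univ.filter fun c : Fin n → F => c ∈ C ∧ c ≠ 0).filter
        fun c => hammingNorm c = w).card = q - 1 := by
    by_contra hcon
    push_neg at hcon
    obtain ⟨w0, hw0, hne⟩ := hcon
    have hlt : (weightSet C).card * (q - 1) < ∑ w ∈ weightSet C,
        ((Finset.univ.filter fun c : Fin n → F => c ∈ C ∧ c ≠ 0).filter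
          fun c => hammingNorm c = w).card := by
      rw [← smul_eq_mul, ← Finset.sum_const]
      exact Finset.sum_lt_sum (fun w hw => hfib_ge w hw)
        ⟨w0, hw0, lt_of_le_of_ne (hfib_ge w0 hw0) (Ne.symm hne)⟩
    rw [hfibsum, hTcard, hMWS, ← hqdef, mul_comm] at hlt
    have hmul := qk_mul q k hq
    omega
  -- sum of weights
  have hcomp : ∑ c ∈ (Finset.univ.filter fun c : Fin n → F => c ∈ C ∧ c ≠ 0), hammingNorm c
      = ∑ w ∈ weightSet C,
          ((Finset.univ.filter fun c : Fin n → F => c ∈ C ∧ c ≠ 0).filter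
            fun c => hammingNorm c = w).card • w :=
    Finset.sum_comp (fun w => w) (fun c => hammingNorm c)
  have hsum_weights : (q - 1) * ∑ w ∈ weightSet C, w = n * (q ^ k - q ^ (k - 1)) := by
    rw [← hsumT, hcomp, Finset.mul_sum]
    refine Finset.sum_congr rfl fun w hw => ?_
    rw [hfib w hw, smul_eq_mul]
  have hpow : q ^ k - q ^ (k - 1) = (q - 1) * q ^ (k - 1) := by
    have h3 : q ^ k = q * q ^ (k - 1) := by
      rw [← pow_succ']
      congr 1
      omega
    rw [h3, Nat.sub_mul, one_mul]
  apply Nat.eq_of_mul_eq_mul_left (show 0 < q - 1 by omega)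
  rw [hsum_weights, hpow]
  ring

/-- If $q·k$ is even, then the spread of a non-degenerate $[n,k]_q$ MWS code
is a non-negative multiple of $q_{k-1}$. -/
theorem stmt_7 {F : Type*} [Field F] [Fintype F] {n k : ℕ}
    (heven : Even (Fintype.card F * k))
    (C : Submodule F (Fin n → F))
    (hdim : Module.finrank F C = k)
    (hnd : Nondeg C)
    (hMWS : IsMWS C k) :
    ∃ h : ℕ, spread C k = (h : ℤ) * qk (Fintype.card F) (k - 1) := by
  classical
  set q := Fintype.card F with hqdef
  have hq : 2 ≤ q := Fintype.one_lt_card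
  rcases Nat.eq_zero_or_pos k with rfl | hk
  · have hqk0 : qk q 0 = 0 := by simp [qk]
    have hS : weightSet C = ∅ := by
      apply Finset.card_eq_zero.mp
      rw [hMWS, ← hqdef, hqk0]
    exact ⟨0, by simp [spread, hS, ← hqdef, hqk0]⟩
  obtain ⟨k', rfl⟩ : ∃ k', k = k' + 1 := ⟨k - 1, by omega⟩
  have hSw : ∑ w ∈ weightSet C, w = n * q ^ k' :=
    sum_weights_eq C hdim (by omega) hnd hMWS
  set Q := qk q (k' + 1) with hQdef
  set P := qk q k' with hPdef
  have hQ1 : Q = q * P + 1 := qk_succ q k' hq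
  have hQsplit : Q = P + q ^ k' := qk_split q k' hq
  obtain ⟨m, hm⟩ : Even (q * Q) := even_q_qk q (k' + 1) hq heven
  have hD : Q * (Q - 1) / 2 = m * P := by
    have h1 : Q - 1 = q * P := by omega
    have h2 : Q * (Q - 1) = 2 * (m * P) := by
      rw [h1, ← mul_assoc, mul_comm Q q, hm]; ring
    rw [h2]
    exact Nat.mul_div_cancel_left _ (by norm_num)
  have hcastS : ∑ w ∈ weightSet C, (w : ℤ) = ((n * q ^ k' : ℕ) : ℤ) := by
    rw [← Nat.cast_sum, hSw]
  have hspread : spread C (k' + 1) = ((n : ℤ) - m) * P := by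
    rw [spread, hcastS, ← hqdef, ← hQdef, hD, hQsplit]
    push_cast
    ring
  -- nonnegativity of the spread
  have hwle : ∀ w ∈ weightSet C, w ≤ n := by
    intro w hw
    obtain ⟨c, _, rfl⟩ := Finset.mem_image.mp hw
    calc hammingNorm c ≤ (Finset.univ : Finset (Fin n)).card := Finset.card_filter_le _ _
    _ = n := by simp
  have hQcard : (weightSet C).card = Q := hMWS
  have hVcard : ((weightSet C).image fun w => n - w).card = Q := by
    rw [Finset.card_image_of_injOn, hQcard]
    intro a ha b hb hab
    simp only at hab
    have := hwle a ha
    have := hwle b hb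
    omega
  have hVsum : ∑ v ∈ (weightSet C).image (fun w => n - w), v
      = ∑ w ∈ weightSet C, (n - w) := by
    apply Finset.sum_image
    intro a ha b hb hab
    simp only at hab
    have := hwle a ha
    have := hwle b hb
    omega
  have hlow : Q * (Q - 1) / 2 ≤ ∑ w ∈ weightSet C, (n - w) := by
    rw [← hVsum, ← Finset.sum_range_id Q]
    exact sum_ge_sum_range Q _ hVcard
  have hcastV : ((∑ w ∈ weightSet C, (n - w) : ℕ) : ℤ)
      = (n : ℤ) * Q - ∑ w ∈ weightSet C, (w : ℤ) := by
    rw [Nat.cast_sum]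
    rw [Finset.sum_congr rfl (fun w hw => Nat.cast_sub (hwle w hw))]
    rw [Finset.sum_sub_distrib, Finset.sum_const, hQcard]
    ring
  have hnonneg : 0 ≤ spread C (k' + 1) := by
    have h1 : ((Q * (Q - 1) / 2 : ℕ) : ℤ) ≤ (n : ℤ) * Q - ∑ w ∈ weightSet C, (w : ℤ) := by
      rw [← hcastV]; exact_mod_cast hlow
    rw [spread, ← hqdef, ← hQdef]
    linarith
  by_cases hP0 : P = 0
  · refine ⟨0, ?_⟩
    have : spread C (k' + 1) = 0 := by rw [hspread, hP0]; simp
    rw [this]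
    simp [← hqdef, ← hPdef]
  · have hPpos : 0 < P := Nat.pos_of_ne_zero hP0
    have hmn : (m : ℤ) ≤ n := by
      by_contra hcon
      push_neg at hcon
      have : spread C (k' + 1) < 0 := by
        rw [hspread]
        apply mul_neg_of_neg_of_pos
        · omega
        · exact_mod_cast hPpos
      omega
    refine ⟨n - m, ?_⟩
    rw [hspread]
    have hmn' : m ≤ n := by exact_mod_cast hmn
    simp only [← hqdef, Nat.add_sub_cancel, ← hPdef]
    rw [Nat.cast_sub hmn']
end

section
/- For every prime power q and every integer k ≥ 2, there exists an [n,k,d]_q MWS code with n = 2^{q_k} − 1 and d = 2^{q^{k−1} − 1} − 1. -/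
open scoped Classical
open Finset

namespace MWS14




lemma sum_range_two_pow (m : ℕ) : ∑ j ∈ Finset.range m, 2 ^ j = 2 ^ m - 1 := by
  induction m with
  | zero => simp
  | succ n ih =>
    have h1 : 1 ≤ 2 ^ n := Nat.one_le_two_pow
    rw [Finset.sum_range_succ, ih, pow_succ]
    omega

lemma sum_two_pow_lt {A : Finset ℕ} {m : ℕ} (h : A ⊆ Finset.range m) :
    ∑ j ∈ A, 2 ^ j < 2 ^ m := by
  have h1 : 1 ≤ 2 ^ m := Nat.one_le_two_pow
  calc ∑ j ∈ A, 2 ^ j ≤ ∑ j ∈ Finset.range m, 2 ^ j :=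
        Finset.sum_le_sum_of_subset h
    _ = 2 ^ m - 1 := sum_range_two_pow m
    _ < 2 ^ m := by omega

lemma sum_two_pow_inj : ∀ (m : ℕ) (A B : Finset ℕ), A ⊆ Finset.range m → B ⊆ Finset.range m →
    (∑ j ∈ A, 2 ^ j) = (∑ j ∈ B, 2 ^ j) → A = B := by
  intro m
  induction m with
  | zero =>
    intro A B hA hB _
    rw [Finset.range_zero, Finset.subset_empty] at hA hB
    rw [hA, hB]
  | succ m ih =>
    intro A B hA hB hsum
    have key : ∀ C D : Finset ℕ, C ⊆ Finset.range (m + 1) → D ⊆ Finset.range (m + 1) →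
        (∑ j ∈ C, 2 ^ j) = (∑ j ∈ D, 2 ^ j) → m ∈ C → m ∈ D := by
      intro C D hC hD hs hm
      by_contra hmD
      have hDm : D ⊆ Finset.range m := by
        intro j hj
        have hj1 := hD hj
        rw [Finset.mem_range] at hj1 ⊢
        rcases Nat.lt_succ_iff_lt_or_eq.1 hj1 with h | h
        · exact h
        · exact absurd (h ▸ hj) hmD
      have h1 : (2 : ℕ) ^ m ≤ ∑ j ∈ C, 2 ^ j :=
        Finset.single_le_sum (fun _ _ => Nat.zero_le _) hm
      have h2 : ∑ j ∈ D, 2 ^ j < 2 ^ m := sum_two_pow_lt hDm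
      omega
    by_cases hm : m ∈ A
    · have hmB := key A B hA hB hsum hm
      have hA' : A.erase m ⊆ Finset.range m := by
        intro j hj
        rw [Finset.mem_erase] at hj
        have := hA hj.2
        rw [Finset.mem_range] at this ⊢
        omega
      have hB' : B.erase m ⊆ Finset.range m := by
        intro j hj
        rw [Finset.mem_erase] at hj
        have := hB hj.2
        rw [Finset.mem_range] at this ⊢
        omega
      have he : ∑ j ∈ A.erase m, 2 ^ j = ∑ j ∈ B.erase m, 2 ^ j := by
        rw [← Finset.add_sum_erase A _ hm, ← Finset.add_sum_erase B _ hmB] at hsum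
        omega
      have := ih _ _ hA' hB' he
      rw [← Finset.insert_erase hm, ← Finset.insert_erase hmB, this]
    · have hmB : m ∉ B := fun h => hm (key B A hB hA hsum.symm h)
      refine ih A B ?_ ?_ hsum
      · intro j hj
        have := hA hj
        rw [Finset.mem_range] at this ⊢
        rcases Nat.lt_succ_iff_lt_or_eq.1 this with h | h
        · exact h
        · exact absurd (h ▸ hj) hm
      · intro j hj
        have := hB hj
        rw [Finset.mem_range] at this ⊢
        rcases Nat.lt_succ_iff_lt_or_eq.1 this with h | h
        · exact h
        · exact absurd (h ▸ hj) hmB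

/-- Binary masses attached to slot `i` out of `N` slots. -/
def bits (N i : ℕ) : Finset ℕ :=
  if i = 0 then ∅ else if i = N - 1 then {N - 2, N - 1} else {i - 1}

lemma mem_bits {N i j : ℕ} (hi : i < N) (hN : 3 ≤ N) :
    j ∈ bits N i ↔ (i ≠ 0 ∧ i ≠ N - 1 ∧ j = i - 1) ∨ (i = N - 1 ∧ (j = N - 2 ∨ j = N - 1)) := by
  unfold bits
  split_ifs with h0 h1 <;>
    simp_all [Finset.mem_insert, Finset.mem_singleton] <;> omega

lemma bits_subset_range {N i : ℕ} (hi : i < N) (hN : 3 ≤ N) :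
    bits N i ⊆ Finset.range N := by
  intro j hj
  rw [mem_bits hi hN] at hj
  rw [Finset.mem_range]
  omega

lemma bits_disjoint {N i i' : ℕ} (hN : 3 ≤ N) (hi : i < N) (hi' : i' < N) (hne : i ≠ i') :
    Disjoint (bits N i) (bits N i') := by
  rw [Finset.disjoint_left]
  intro j hj hj'
  rw [mem_bits hi hN] at hj
  rw [mem_bits hi' hN] at hj'
  omega

/-- The total mass of slot `i`. -/
def multOf (N i : ℕ) : ℕ := ∑ j ∈ bits N i, 2 ^ j

lemma multOf_pos {N i : ℕ} (hN : 3 ≤ N) (hi : i < N) (h0 : i ≠ 0) : 0 < multOf N i := by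
  obtain ⟨j, hj⟩ : ∃ j, j ∈ bits N i := by
    by_cases h1 : i = N - 1
    · exact ⟨N - 2, by rw [mem_bits hi hN]; omega⟩
    · exact ⟨i - 1, by rw [mem_bits hi hN]; omega⟩
  calc 0 < 2 ^ j := Nat.pow_pos (by omega)
    _ ≤ multOf N i := Finset.single_le_sum (fun _ _ => Nat.zero_le _) hj

lemma multOf_ge {N i s : ℕ} (hN : 3 ≤ N) (hi : i < N) (hs1 : 1 ≤ s) (hsi : s ≤ i)
    (hsN : s + 1 ≤ N) : 2 ^ (s - 1) ≤ multOf N i := by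
  unfold multOf
  by_cases h1 : i = N - 1
  · have hne : N - 2 ≠ N - 1 := by omega
    have : bits N i = {N - 2, N - 1} := by unfold bits; rw [if_neg (by omega), if_pos h1]
    rw [this, Finset.sum_pair hne]
    have h2 : (2 : ℕ) ^ (s - 1) ≤ 2 ^ (N - 2) := Nat.pow_le_pow_right (by omega) (by omega)
    exact le_trans h2 (Nat.le_add_right _ _)
  · have : bits N i = {i - 1} := by unfold bits; rw [if_neg (by omega), if_neg h1]
    rw [this, Finset.sum_singleton]
    exact Nat.pow_le_pow_right (by omega) (by omega)

lemma biUnion_bits_range {N : ℕ} (hN : 3 ≤ N) :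
    (Finset.range N).biUnion (bits N) = Finset.range N := by
  ext j
  simp only [Finset.mem_biUnion, Finset.mem_range]
  constructor
  · rintro ⟨i, hi, hj⟩
    have := bits_subset_range hi hN hj
    rwa [Finset.mem_range] at this
  · intro hj
    by_cases h : N - 2 ≤ j
    · exact ⟨N - 1, by omega, by rw [mem_bits (by omega) hN]; omega⟩
    · exact ⟨j + 1, by omega, by rw [mem_bits (by omega) hN]; omega⟩

lemma biUnion_bits_lower {N s : ℕ} (hN : 3 ≤ N) (hs : 1 ≤ s) (hsN : s + 1 ≤ N) :
    (Finset.range s).biUnion (bits N) = Finset.range (s - 1) := by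
  ext j
  simp only [Finset.mem_biUnion, Finset.mem_range]
  constructor
  · rintro ⟨i, hi, hj⟩
    rw [mem_bits (by omega) hN] at hj
    omega
  · intro hj
    exact ⟨j + 1, by omega, by rw [mem_bits (by omega) hN]; omega⟩

lemma exists_equiv_fin {α : Type*} [Fintype α] (A : Finset α) :
    ∃ e : α ≃ Fin (Fintype.card α), ∀ a, ((e a : ℕ) < A.card ↔ a ∈ A) := by
  classical
  set s := A.card with hs
  have hsle : s ≤ Fintype.card α := by
    rw [hs]; exact Finset.card_le_univ A
  have h1 : Fintype.card {a // a ∈ A} = s := by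
    rw [Fintype.card_coe]
  have h2 : Fintype.card {a // a ∉ A} = Fintype.card α - s := by
    rw [Fintype.card_subtype_compl, Fintype.card_coe]
  let eA : {a // a ∈ A} ≃ Fin s := Fintype.equivFinOfCardEq h1
  let eAc : {a // a ∉ A} ≃ Fin (Fintype.card α - s) := Fintype.equivFinOfCardEq h2
  have hadd : s + (Fintype.card α - s) = Fintype.card α := by omega
  let e : α ≃ Fin (Fintype.card α) :=
    (Equiv.sumCompl (· ∈ A)).symm.trans
      ((Equiv.sumCongr eA eAc).trans (finSumFinEquiv.trans (finCongr hadd)))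
  refine ⟨e, fun a => ?_⟩
  by_cases ha : a ∈ A
  · have : (Equiv.sumCompl (· ∈ A)).symm a = Sum.inl ⟨a, ha⟩ := by
      simp [Equiv.sumCompl, ha]
    simp only [e, Equiv.trans_apply, this, Equiv.sumCongr_apply, Sum.map_inl]
    rw [finSumFinEquiv]
    simp only [Equiv.coe_fn_mk, Fin.addCases_left]
    simp [ha]
  · have : (Equiv.sumCompl (· ∈ A)).symm a = Sum.inr ⟨a, ha⟩ := by
      simp [Equiv.sumCompl, ha]
    simp only [e, Equiv.trans_apply, this, Equiv.sumCongr_apply, Sum.map_inr]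
    rw [finSumFinEquiv]
    simp only [Equiv.coe_fn_mk, Fin.addCases_right]
    simp [ha]





lemma bits_nonempty {N i : ℕ} (hN : 3 ≤ N) (hi : i < N) (h0 : i ≠ 0) : ∃ j, j ∈ bits N i := by
  by_cases h1 : i = N - 1
  · exact ⟨N - 2, by rw [mem_bits hi hN]; omega⟩
  · exact ⟨i - 1, by rw [mem_bits hi hN]; omega⟩

lemma indexsets_eq {N : ℕ} (hN : 3 ≤ N) (U V : Finset ℕ) (hU : U ⊆ Finset.range N)
    (hV : V ⊆ Finset.range N) (hcard : U.card = V.card)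
    (h : U.biUnion (bits N) = V.biUnion (bits N)) : U = V := by
  have key : ∀ U V : Finset ℕ, U ⊆ Finset.range N → V ⊆ Finset.range N →
      U.biUnion (bits N) = V.biUnion (bits N) → ∀ i ∈ U, i ≠ 0 → i ∈ V := by
    intro U V hU hV h i hiU hi0
    have hiN : i < N := Finset.mem_range.1 (hU hiU)
    obtain ⟨j, hj⟩ := bits_nonempty hN hiN hi0
    have hjV : j ∈ V.biUnion (bits N) := by
      rw [← h]; exact Finset.mem_biUnion.2 ⟨i, hiU, hj⟩
    obtain ⟨i', hi'V, hj'⟩ := Finset.mem_biUnion.1 hjV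
    have hi'N : i' < N := Finset.mem_range.1 (hV hi'V)
    by_cases hii : i = i'
    · exact hii ▸ hi'V
    · exact absurd hj' (Finset.disjoint_left.1 (bits_disjoint hN hiN hi'N hii) hj)
  have herase : U.erase 0 = V.erase 0 := by
    ext i
    simp only [Finset.mem_erase]
    constructor
    · rintro ⟨h0, hiU⟩; exact ⟨h0, key U V hU hV h i hiU h0⟩
    · rintro ⟨h0, hiV⟩; exact ⟨h0, key V U hV hU h.symm i hiV h0⟩
  by_cases h0U : 0 ∈ U <;> by_cases h0V : 0 ∈ V
  · rw [← Finset.insert_erase h0U, ← Finset.insert_erase h0V, herase]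
  · exfalso
    have c1 : (U.erase 0).card = U.card - 1 := Finset.card_erase_of_mem h0U
    have c2 : V.erase 0 = V := Finset.erase_eq_of_notMem h0V
    have c3 : 0 < U.card := Finset.card_pos.2 ⟨0, h0U⟩
    rw [herase, c2] at c1
    omega
  · exfalso
    have c1 : (V.erase 0).card = V.card - 1 := Finset.card_erase_of_mem h0V
    have c2 : U.erase 0 = U := Finset.erase_eq_of_notMem h0U
    have c3 : 0 < V.card := Finset.card_pos.2 ⟨0, h0V⟩
    rw [← herase, c2] at c1
    omega
  · rw [← Finset.erase_eq_of_notMem h0U, ← Finset.erase_eq_of_notMem h0V, herase]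

lemma exists_mult {α : Type*} [Fintype α] {N s : ℕ} (hN : 3 ≤ N) (hs : 1 ≤ s)
    (hsN : s + 1 ≤ N) (hcard : Fintype.card α = N) (A : Finset α) (hA : A.card = s) :
    ∃ mult : α → ℕ,
      (∑ a, mult a = 2 ^ N - 1) ∧
      (∑ a ∈ A, mult a = 2 ^ (s - 1) - 1) ∧
      (∀ S T : Finset α, S.card = T.card → (∑ a ∈ S, mult a) = (∑ a ∈ T, mult a) → S = T) ∧
      (∀ a ∉ A, 2 ^ (s - 1) ≤ mult a) ∧
      (∀ S : Finset α, 2 ≤ S.card → 0 < ∑ a ∈ S, mult a) := by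
  classical
  obtain ⟨e₀, he₀⟩ := exists_equiv_fin A
  let e : α ≃ Fin N := e₀.trans (finCongr hcard)
  have he : ∀ a, ((e a : ℕ) < s ↔ a ∈ A) := by
    intro a
    have hval : (e a : ℕ) = (e₀ a : ℕ) := rfl
    rw [hval, ← hA]; exact he₀ a
  set ι : α → ℕ := fun a => (e a : ℕ) with hι
  have hι_lt : ∀ a, ι a < N := fun a => (e a).isLt
  have hι_inj : Function.Injective ι := fun a b h => e.injective (Fin.val_injective h)
  have hWt : ∀ S : Finset α, ∑ a ∈ S, multOf N (ι a)
      = ∑ j ∈ (S.image ι).biUnion (bits N), 2 ^ j := by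
    intro S
    rw [Finset.image_biUnion, Finset.sum_biUnion]
    · rfl
    · intro a _ b _ hab
      exact bits_disjoint hN (hι_lt a) (hι_lt b) (fun h => hab (hι_inj h))
  have himage_univ : Finset.univ.image ι = Finset.range N := by
    ext j
    simp only [Finset.mem_image, Finset.mem_range, Finset.mem_univ, true_and]
    constructor
    · rintro ⟨a, rfl⟩; exact hι_lt a
    · intro hj
      exact ⟨e.symm ⟨j, hj⟩, by simp [hι]⟩
  have himage_A : A.image ι = Finset.range s := by
    ext j
    simp only [Finset.mem_image, Finset.mem_range]
    constructor
    · rintro ⟨a, ha, rfl⟩; exact (he a).2 ha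
    · intro hj
      have hjN : j < N := by omega
      refine ⟨e.symm ⟨j, hjN⟩, ?_, by simp [hι]⟩
      exact (he _).1 (by simpa using hj)
  refine ⟨fun a => multOf N (ι a), ?_, ?_, ?_, ?_, ?_⟩
  · rw [hWt, himage_univ, biUnion_bits_range hN, sum_range_two_pow]
  · rw [hWt, himage_A, biUnion_bits_lower hN hs hsN, sum_range_two_pow]
  · intro S T hcardST hsum
    rw [hWt, hWt] at hsum
    have hUsub : S.image ι ⊆ Finset.range N := by
      rw [← himage_univ]; exact Finset.image_subset_image (Finset.subset_univ S)
    have hVsub : T.image ι ⊆ Finset.range N := by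
      rw [← himage_univ]; exact Finset.image_subset_image (Finset.subset_univ T)
    have hbU : (S.image ι).biUnion (bits N) ⊆ Finset.range N :=
      Finset.biUnion_subset.2 fun i hi =>
        bits_subset_range (Finset.mem_range.1 (hUsub hi)) hN
    have hbV : (T.image ι).biUnion (bits N) ⊆ Finset.range N :=
      Finset.biUnion_subset.2 fun i hi =>
        bits_subset_range (Finset.mem_range.1 (hVsub hi)) hN
    have hb := sum_two_pow_inj N _ _ hbU hbV hsum
    have himgeq : S.image ι = T.image ι := by
      refine indexsets_eq hN _ _ hUsub hVsub ?_ hb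
      rw [Finset.card_image_of_injective S hι_inj, Finset.card_image_of_injective T hι_inj,
        hcardST]
    ext a
    constructor
    · intro haS
      have : ι a ∈ T.image ι := by
        rw [← himgeq]; exact Finset.mem_image_of_mem ι haS
      obtain ⟨b, hbT, hba⟩ := Finset.mem_image.1 this
      rwa [← hι_inj hba]
    · intro haT
      have : ι a ∈ S.image ι := by
        rw [himgeq]; exact Finset.mem_image_of_mem ι haT
      obtain ⟨b, hbS, hba⟩ := Finset.mem_image.1 this
      rwa [← hι_inj hba]
  · intro a ha
    have : s ≤ ι a := by
      by_contra hlt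
      exact ha ((he a).1 (Nat.lt_of_not_le hlt))
    exact multOf_ge hN (hι_lt a) hs this hsN
  · intro S hS
    obtain ⟨a, ha, b, hb, hab⟩ := Finset.one_lt_card.1 hS
    have hne : ι a ≠ ι b := fun h => hab (hι_inj h)
    by_cases h0 : ι a = 0
    · calc 0 < multOf N (ι b) :=
            multOf_pos hN (hι_lt b) (fun hb0 => hne (by rw [h0, hb0]))
        _ ≤ ∑ a ∈ S, multOf N (ι a) :=
          Finset.single_le_sum (f := fun c => multOf N (ι c)) (fun _ _ => Nat.zero_le _) hb
    · calc 0 < multOf N (ι a) := multOf_pos hN (hι_lt a) h0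
        _ ≤ ∑ a ∈ S, multOf N (ι a) :=
          Finset.single_le_sum (f := fun c => multOf N (ι c)) (fun _ _ => Nat.zero_le _) ha



section Proj

open Matrix Projectivization

variable {F : Type*} [Field F] [Fintype F] {k : ℕ}

noncomputable instance : Fintype (Projectivization F (Fin k → F)) :=
  @Quotient.fintype _ _ (projectivizationSetoid F (Fin k → F))
    (fun _ _ => Classical.propDecidable _)

lemma dot_rep_mk (x v : Fin k → F) (hv : v ≠ 0) :
    ∃ a : Fˣ, x ⬝ᵥ (Projectivization.mk F v hv).rep = (a : F) * (x ⬝ᵥ v) := by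
  obtain ⟨a, ha⟩ := Projectivization.exists_smul_eq_mk_rep F v hv
  refine ⟨a, ?_⟩
  rw [← ha, Units.smul_def, dotProduct_smul, smul_eq_mul]

/-- Scaling a representative gives a bijection `ℙ(V) × Fˣ ≃ V \ {0}`. -/
noncomputable def unitsProdEquiv :
    (Projectivization F (Fin k → F)) × Fˣ ≃ {v : Fin k → F // v ≠ 0} :=
  Equiv.ofBijective
    (fun x => ⟨(x.2 : F) • x.1.rep, smul_ne_zero (Units.ne_zero x.2) x.1.rep_nonzero⟩)
    (by
      constructor
      · rintro ⟨Q, a⟩ ⟨R, b⟩ hEq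
        simp only [Subtype.mk.injEq] at hEq
        have hQR : Q = R := by
          rw [← Q.mk_rep, ← R.mk_rep]
          refine (Projectivization.mk_eq_mk_iff' F _ _ Q.rep_nonzero R.rep_nonzero).2
            ⟨(a : F)⁻¹ * b, ?_⟩
          rw [mul_smul, ← hEq, inv_smul_smul₀ (Units.ne_zero a)]
        subst hQR
        have hab : (a : F) = (b : F) := smul_left_injective F Q.rep_nonzero hEq
        exact Prod.ext rfl (Units.ext hab)
      · rintro ⟨v, hv⟩
        obtain ⟨a, ha⟩ := Projectivization.exists_smul_eq_mk_rep F v hv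
        refine ⟨(Projectivization.mk F v hv, a⁻¹), Subtype.ext ?_⟩
        show ((a⁻¹ : Fˣ) : F) • (Projectivization.mk F v hv).rep = v
        rw [← ha, Units.smul_def, smul_smul]
        simp)

lemma mk_unitsProdEquiv (x : (Projectivization F (Fin k → F)) × Fˣ) :
    Projectivization.mk F ((unitsProdEquiv x : {v : Fin k → F // v ≠ 0}) : Fin k → F)
      (unitsProdEquiv x).2 = x.1 := by
  obtain ⟨Q, a⟩ := x
  show Projectivization.mk F ((a : F) • Q.rep) _ = Q
  conv_rhs => rw [← Q.mk_rep]
  exact (Projectivization.mk_eq_mk_iff' F _ _ _ Q.rep_nonzero).2 ⟨a, rfl⟩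

lemma card_proj_units :
    Fintype.card (Projectivization F (Fin k → F)) * Fintype.card Fˣ
      = Fintype.card F ^ k - 1 := by
  classical
  calc Fintype.card (Projectivization F (Fin k → F)) * Fintype.card Fˣ
      = Fintype.card ((Projectivization F (Fin k → F)) × Fˣ) := (Fintype.card_prod _ _).symm
    _ = Fintype.card {v : Fin k → F // v ≠ 0} := Fintype.card_congr unitsProdEquiv
    _ = Fintype.card F ^ k - 1 := by
        rw [Fintype.card_subtype_compl, Fintype.card_subtype_eq, Fintype.card_fun,
          Fintype.card_fin]

lemma exists_dot_eq_one {x : Fin k → F} (hx : x ≠ 0) : ∃ v : Fin k → F, x ⬝ᵥ v = 1 := by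
  obtain ⟨i0, hi0⟩ : ∃ i, x i ≠ 0 := Function.ne_iff.1 hx
  exact ⟨Pi.single i0 (x i0)⁻¹, by rw [dotProduct_single, mul_inv_cancel₀ hi0]⟩

lemma card_dot_ne (x : Fin k → F) (hx : x ≠ 0) (hk : 1 ≤ k) :
    Fintype.card {Q : Projectivization F (Fin k → F) // x ⬝ᵥ Q.rep ≠ 0} * Fintype.card Fˣ
      = Fintype.card F ^ k - Fintype.card F ^ (k - 1) := by
  classical
  have hiff : ∀ v : Fin k → F,
      (∃ h : v ≠ 0, x ⬝ᵥ (Projectivization.mk F v h).rep ≠ 0) ↔ x ⬝ᵥ v ≠ 0 := by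
    intro v
    constructor
    · rintro ⟨hv, hne⟩
      obtain ⟨a, ha⟩ := dot_rep_mk x v hv
      rw [ha] at hne
      exact fun h0 => hne (by rw [h0, mul_zero])
    · intro hne
      have hv : v ≠ 0 := fun h0 => hne (by rw [h0, dotProduct_zero])
      obtain ⟨a, ha⟩ := dot_rep_mk x v hv
      exact ⟨hv, by rw [ha]; exact mul_ne_zero (Units.ne_zero a) hne⟩
  have E : {Q : Projectivization F (Fin k → F) // x ⬝ᵥ Q.rep ≠ 0} × Fˣ
      ≃ {v : Fin k → F // x ⬝ᵥ v ≠ 0} :=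
    (Equiv.prodSubtypeFstEquivSubtypeProd
        (p := fun Q : Projectivization F (Fin k → F) => x ⬝ᵥ Q.rep ≠ 0)).symm.trans
      ((unitsProdEquiv.subtypeEquiv
          (q := fun v : {v : Fin k → F // v ≠ 0} =>
            x ⬝ᵥ (Projectivization.mk F v.1 v.2).rep ≠ 0)
          (fun y => by beta_reduce; rw [mk_unitsProdEquiv y])).trans
        ((Equiv.subtypeSubtypeEquivSubtypeExists _ _).trans (Equiv.subtypeEquivRight hiff)))
  have hmain : Fintype.card {Q : Projectivization F (Fin k → F) // x ⬝ᵥ Q.rep ≠ 0}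
      * Fintype.card Fˣ = Fintype.card {v : Fin k → F // x ⬝ᵥ v ≠ 0} :=
    (Fintype.card_prod _ _).symm.trans (Fintype.card_congr E)
  rw [hmain]
  obtain ⟨v₁, hv₁⟩ := exists_dot_eq_one hx
  have eker : {v : Fin k → F // x ⬝ᵥ v = 0} × F ≃ (Fin k → F) := by
    refine Equiv.ofBijective (fun y => y.1.1 + y.2 • v₁) ⟨?_, ?_⟩
    · rintro ⟨⟨w, hw⟩, c⟩ ⟨⟨w', hw'⟩, c'⟩ hEq
      simp only at hEq
      have hc : c = c' := by
        have h2 := congrArg (fun u => x ⬝ᵥ u) hEq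
        simpa [dotProduct_add, dotProduct_smul, hw, hw', hv₁] using h2
      subst hc
      have hww : w = w' := add_right_cancel hEq
      subst hww
      rfl
    · intro v
      refine ⟨⟨⟨v - (x ⬝ᵥ v) • v₁, ?_⟩, x ⬝ᵥ v⟩, ?_⟩
      · rw [dotProduct_sub, dotProduct_smul, hv₁, smul_eq_mul, mul_one, sub_self]
      · simp
  have hker : Fintype.card {v : Fin k → F // x ⬝ᵥ v = 0} * Fintype.card F
      = Fintype.card F ^ k := by
    have h2 := Fintype.card_congr eker
    rwa [Fintype.card_prod, Fintype.card_fun, Fintype.card_fin] at h2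
  have hker' : Fintype.card {v : Fin k → F // x ⬝ᵥ v = 0} = Fintype.card F ^ (k - 1) := by
    have hq : 0 < Fintype.card F := Fintype.card_pos
    have hpow : Fintype.card F ^ k = Fintype.card F ^ (k - 1) * Fintype.card F := by
      rw [← pow_succ]
      congr 1
      omega
    rw [hpow] at hker
    exact Nat.eq_of_mul_eq_mul_right hq hker
  rw [Fintype.card_subtype_compl, Fintype.card_fun, Fintype.card_fin, hker']

/-- The set of projective points on which the functional `x ⬝ᵥ ·` does not vanish. -/
noncomputable def supp (x : Fin k → F) : Finset (Projectivization F (Fin k → F)) :=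
  Finset.univ.filter fun Q => x ⬝ᵥ Q.rep ≠ 0

lemma mem_supp {x : Fin k → F} {Q : Projectivization F (Fin k → F)} :
    Q ∈ supp x ↔ x ⬝ᵥ Q.rep ≠ 0 := by simp [supp]

lemma supp_rep_mk (x : Fin k → F) (hx : x ≠ 0) :
    supp ((Projectivization.mk F x hx).rep) = supp x := by
  obtain ⟨a, ha⟩ := Projectivization.exists_smul_eq_mk_rep F x hx
  ext Q
  rw [mem_supp, mem_supp, ← ha, Units.smul_def, smul_dotProduct, smul_eq_mul]
  simp [mul_ne_zero_iff, Units.ne_zero a]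

lemma card_supp {x : Fin k → F} (hx : x ≠ 0) (hk : 1 ≤ k) :
    (supp x).card * Fintype.card Fˣ = Fintype.card F ^ k - Fintype.card F ^ (k - 1) := by
  classical
  have h1 : (supp x).card = Fintype.card {Q : Projectivization F (Fin k → F) // x ⬝ᵥ Q.rep ≠ 0} := by
    rw [Fintype.card_subtype]
    rfl
  rw [h1, card_dot_ne x hx hk]

lemma mk_eq_of_supp_eq {x y : Fin k → F} (hx : x ≠ 0) (hy : y ≠ 0) (h : supp x = supp y) :
    Projectivization.mk F x hx = Projectivization.mk F y hy := by
  have hker : ∀ v, x ⬝ᵥ v = 0 → y ⬝ᵥ v = 0 := by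
    intro v hv0
    rcases eq_or_ne v 0 with rfl | hv
    · rw [dotProduct_zero]
    · obtain ⟨a, ha⟩ := dot_rep_mk x v hv
      obtain ⟨b, hb⟩ := dot_rep_mk y v hv
      have hnot : Projectivization.mk F v hv ∉ supp x := by
        rw [mem_supp, ha, hv0, mul_zero]
        exact fun h2 => h2 rfl
      rw [h, mem_supp, hb] at hnot
      exact (mul_eq_zero.1 (not_not.1 hnot)).resolve_left (Units.ne_zero b)
  obtain ⟨v₁, hv₁⟩ := exists_dot_eq_one hx
  set c : F := y ⬝ᵥ v₁ with hcdef
  have hyx : y = (y ⬝ᵥ v₁) • x := by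
    funext i
    have h0 : x ⬝ᵥ (Pi.single i 1 - (x i) • v₁) = 0 := by
      rw [dotProduct_sub, dotProduct_smul, dotProduct_single, hv₁, mul_one, smul_eq_mul,
        mul_one, sub_self]
    have h1 := hker _ h0
    rw [dotProduct_sub, dotProduct_smul, dotProduct_single, smul_eq_mul, mul_one,
      sub_eq_zero] at h1
    rw [Pi.smul_apply, smul_eq_mul, h1, mul_comm]
  have hc0 : y ⬝ᵥ v₁ ≠ 0 := by
    intro h0
    rw [h0, zero_smul] at hyx
    exact hy hyx
  refine (Projectivization.mk_eq_mk_iff' F x y hx hy).2 ⟨c⁻¹, ?_⟩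
  rw [hyx, smul_smul, inv_mul_cancel₀ hc0, one_smul]

/-- The generator map of the code attached to a family `φ` of column vectors. -/
def codeMap (n : ℕ) (φ : Fin n → (Fin k → F)) : (Fin k → F) →ₗ[F] (Fin n → F) where
  toFun x := fun j => x ⬝ᵥ φ j
  map_add' x y := funext fun j => add_dotProduct x y (φ j)
  map_smul' c x := funext fun j => smul_dotProduct c x (φ j)

@[simp] lemma codeMap_apply (n : ℕ) (φ : Fin n → (Fin k → F)) (x : Fin k → F) (j : Fin n) :
    codeMap n φ x j = x ⬝ᵥ φ j := rfl

end Proj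

section Norm

open Matrix Projectivization

variable {F : Type*} [Field F] [Fintype F] {k : ℕ}

lemma hammingNorm_codeMap {n : ℕ} (mult : Projectivization F (Fin k → F) → ℕ)
    (ψ : (Σ Q : Projectivization F (Fin k → F), Fin (mult Q)) ≃ Fin n) (x : Fin k → F) :
    hammingNorm (codeMap n (fun j => ((ψ.symm j).1).rep) x) = ∑ Q ∈ supp x, mult Q := by
  classical
  have h0 : hammingNorm (codeMap n (fun j => ((ψ.symm j).1).rep) x)
      = (Finset.univ.filter fun j : Fin n => x ⬝ᵥ ((ψ.symm j).1).rep ≠ 0).card := rfl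
  rw [h0]
  have h1 : (Finset.univ.filter fun j : Fin n => x ⬝ᵥ ((ψ.symm j).1).rep ≠ 0).card
      = (Finset.univ.filter fun y : Σ Q : Projectivization F (Fin k → F), Fin (mult Q) =>
          x ⬝ᵥ y.1.rep ≠ 0).card := by
    refine Finset.card_equiv ψ.symm (fun j => ?_)
    simp only [Finset.mem_filter, Finset.mem_univ, true_and]
  rw [h1, Finset.card_filter, ← Finset.univ_sigma_univ, Finset.sum_sigma]
  have h2 : ∀ Q : Projectivization F (Fin k → F),
      (∑ _t ∈ (Finset.univ : Finset (Fin (mult Q))),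
        if x ⬝ᵥ Q.rep ≠ 0 then (1 : ℕ) else 0) = if x ⬝ᵥ Q.rep ≠ 0 then mult Q else 0 := by
    intro Q
    by_cases h : x ⬝ᵥ Q.rep ≠ 0 <;> simp [h]
  rw [Finset.sum_congr rfl (fun Q _ => h2 Q)]
  rw [supp, Finset.sum_filter]

end Norm


lemma geom_mul (q : ℕ) (hq : 1 ≤ q) (k : ℕ) :
    (q - 1) * ∑ i ∈ Finset.range k, q ^ i = q ^ k - 1 := by
  induction k with
  | zero => simp
  | succ m ih =>
    rw [Finset.sum_range_succ, Nat.mul_add, ih]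
    have h1 : 1 ≤ q ^ m := Nat.one_le_pow _ _ (by omega)
    have h3 : (q - 1) * q ^ m = q * q ^ m - q ^ m := by rw [tsub_mul, one_mul]
    have h2 : q ^ m ≤ q * q ^ m := Nat.le_mul_of_pos_left _ (by omega)
    rw [h3, pow_succ']
    omega

end MWS14

/-- For every prime power $q$ (i.e. every finite field $F_q$) and every
$k ≥ 2$ there exists an $[n,k,d]_q$ MWS code with $n = 2^{q_k} - 1$ and
$d = 2^{q^{k-1}-1} - 1$. -/
theorem stmt_14 {F : Type*} [Field F] [Fintype F] {k : ℕ} (hk : 2 ≤ k) :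
    ∃ C : Submodule F (Fin (2 ^ qk (Fintype.card F) k - 1) → F),
      Module.finrank F C = k ∧
      IsMWS C k ∧
      (2 ^ (Fintype.card F ^ (k - 1) - 1) - 1) ∈ weightSet C ∧
      (∀ w ∈ weightSet C, 2 ^ (Fintype.card F ^ (k - 1) - 1) - 1 ≤ w) := by
  classical
  have hq : 2 ≤ Fintype.card F := Fintype.one_lt_card
  have hk1 : 1 ≤ k := by omega
  have hgeom := MWS14.geom_mul (Fintype.card F) (by omega) k
  have hqk : qk (Fintype.card F) k = ∑ i ∈ Finset.range k, Fintype.card F ^ i := by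
    rw [qk, ← hgeom, Nat.mul_div_cancel_left _ (by omega : 0 < Fintype.card F - 1)]
  have hcardP : Fintype.card (Projectivization F (Fin k → F)) = qk (Fintype.card F) k := by
    have h1 := MWS14.card_proj_units (F := F) (k := k)
    rw [Fintype.card_units] at h1
    rw [hqk]
    refine Nat.eq_of_mul_eq_mul_right (show 0 < Fintype.card F - 1 by omega) ?_
    rw [h1, ← hgeom, mul_comm]
  have hN3 : 3 ≤ qk (Fintype.card F) k := by
    rw [hqk]
    have hle : ∑ i ∈ Finset.range 2, Fintype.card F ^ i
        ≤ ∑ i ∈ Finset.range k, Fintype.card F ^ i :=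
      Finset.sum_le_sum_of_subset (Finset.range_subset_range.2 hk)
    simp only [Finset.sum_range_succ, Finset.sum_range_zero, pow_zero, pow_one,
      zero_add] at hle
    omega
  have hs1 : 1 ≤ Fintype.card F ^ (k - 1) := Nat.one_le_pow _ _ (by omega)
  have hs2 : 2 ≤ Fintype.card F ^ (k - 1) := by
    calc 2 ≤ Fintype.card F := hq
      _ = Fintype.card F ^ 1 := (pow_one _).symm
      _ ≤ Fintype.card F ^ (k - 1) := Nat.pow_le_pow_right (by omega) (by omega)
  have hsN : Fintype.card F ^ (k - 1) + 1 ≤ qk (Fintype.card F) k := by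
    rw [hqk]
    have e1 : ∑ i ∈ Finset.range k, Fintype.card F ^ i
        = ∑ i ∈ Finset.range (k - 1), Fintype.card F ^ i + Fintype.card F ^ (k - 1) := by
      conv_lhs => rw [show k = (k - 1) + 1 by omega]
      rw [Finset.sum_range_succ]
    have e2 : (1 : ℕ) ≤ ∑ i ∈ Finset.range (k - 1), Fintype.card F ^ i := by
      have h0 : (0 : ℕ) ∈ Finset.range (k - 1) := Finset.mem_range.2 (by omega)
      calc (1 : ℕ) = Fintype.card F ^ 0 := (pow_zero _).symm
        _ ≤ ∑ i ∈ Finset.range (k - 1), Fintype.card F ^ i :=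
            Finset.single_le_sum (f := fun i => Fintype.card F ^ i)
              (fun _ _ => Nat.zero_le _) h0
    omega
  have hp : Fintype.card F * Fintype.card F ^ (k - 1) = Fintype.card F ^ k := by
    rw [← pow_succ']
    congr 1
    omega
  have h2 : (Fintype.card F - 1) * Fintype.card F ^ (k - 1)
      = Fintype.card F ^ k - Fintype.card F ^ (k - 1) := by
    rw [tsub_mul, one_mul, hp]
  have hcardsupp : ∀ z : Fin k → F, z ≠ 0 →
      (MWS14.supp z).card = Fintype.card F ^ (k - 1) := by
    intro z hz
    have h1 := MWS14.card_supp hz hk1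
    rw [Fintype.card_units] at h1
    refine Nat.eq_of_mul_eq_mul_right (show 0 < Fintype.card F - 1 by omega) ?_
    rw [h1, ← h2, mul_comm]
  have hk0 : (0 : ℕ) < k := by omega
  set x₀ : Fin k → F := Pi.single ⟨0, hk0⟩ 1 with hx₀def
  have hx₀ : x₀ ≠ 0 := by
    intro h
    have h1 := congrFun h ⟨0, hk0⟩
    rw [hx₀def] at h1
    simp at h1
  have hcards : (MWS14.supp x₀).card = Fintype.card F ^ (k - 1) := hcardsupp x₀ hx₀
  obtain ⟨mult, hm_total, hm_A, hm_sep, hm_low, hm_pos⟩ :=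
    MWS14.exists_mult hN3 hs1 hsN hcardP (MWS14.supp x₀) hcards
  have hcardSigma : Fintype.card (Σ Q : Projectivization F (Fin k → F), Fin (mult Q))
      = 2 ^ qk (Fintype.card F) k - 1 := by
    rw [Fintype.card_sigma]
    simpa using hm_total
  set ψ : (Σ Q : Projectivization F (Fin k → F), Fin (mult Q))
      ≃ Fin (2 ^ qk (Fintype.card F) k - 1) := Fintype.equivFinOfCardEq hcardSigma with hψdef
  set φ : Fin (2 ^ qk (Fintype.card F) k - 1) → (Fin k → F) :=
    fun j => ((ψ.symm j).1).rep with hφdef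
  set G := MWS14.codeMap (2 ^ qk (Fintype.card F) k - 1) φ with hGdef
  have hnorm : ∀ x : Fin k → F, hammingNorm (G x) = ∑ Q ∈ MWS14.supp x, mult Q := by
    intro x
    exact MWS14.hammingNorm_codeMap mult ψ x
  have hGinj : Function.Injective G := by
    rw [← LinearMap.ker_eq_bot, LinearMap.ker_eq_bot']
    intro z hz
    by_contra hz0
    have hn := hnorm z
    rw [hz, hammingNorm_zero] at hn
    have hpos := hm_pos (MWS14.supp z) (by rw [hcardsupp z hz0]; exact hs2)
    omega
  have hWmk : ∀ (x : Fin k → F) (hx : x ≠ 0),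
      (∑ P ∈ MWS14.supp (Projectivization.mk F x hx).rep, mult P)
        = ∑ P ∈ MWS14.supp x, mult P := by
    intro x hx
    rw [MWS14.supp_rep_mk x hx]
  have hwset : weightSet (LinearMap.range G)
      = Finset.image (fun Q : Projectivization F (Fin k → F) =>
          ∑ P ∈ MWS14.supp Q.rep, mult P) Finset.univ := by
    ext w
    simp only [weightSet, Finset.mem_image, Finset.mem_filter, Finset.mem_univ, true_and,
      LinearMap.mem_range]
    constructor
    · rintro ⟨c, ⟨⟨x, rfl⟩, hc0⟩, rfl⟩
      have hx : x ≠ 0 := by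
        rintro rfl
        exact hc0 (map_zero G)
      exact ⟨Projectivization.mk F x hx, by rw [hWmk x hx, hnorm x]⟩
    · rintro ⟨Q, rfl⟩
      refine ⟨G Q.rep, ⟨⟨Q.rep, rfl⟩, ?_⟩, ?_⟩
      · intro h0
        exact Q.rep_nonzero (hGinj (h0.trans (map_zero G).symm))
      · exact hnorm Q.rep
  have hWinj : Function.Injective (fun Q : Projectivization F (Fin k → F) =>
      ∑ P ∈ MWS14.supp Q.rep, mult P) := by
    intro Q R hQR
    simp only at hQR
    have hsupp : MWS14.supp Q.rep = MWS14.supp R.rep :=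
      hm_sep _ _ (by rw [hcardsupp _ Q.rep_nonzero, hcardsupp _ R.rep_nonzero]) hQR
    have hmk := MWS14.mk_eq_of_supp_eq Q.rep_nonzero R.rep_nonzero hsupp
    rwa [Q.mk_rep, R.mk_rep] at hmk
  refine ⟨LinearMap.range G, ?_, ?_, ?_, ?_⟩
  · rw [LinearMap.finrank_range_of_inj hGinj, Module.finrank_fin_fun]
  · show (weightSet (LinearMap.range G)).card = qk (Fintype.card F) k
    rw [hwset, Finset.card_image_of_injective _ hWinj, Finset.card_univ, hcardP]
  · rw [hwset]
    refine Finset.mem_image.2 ⟨Projectivization.mk F x₀ hx₀, Finset.mem_univ _, ?_⟩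
    show (∑ P ∈ MWS14.supp (Projectivization.mk F x₀ hx₀).rep, mult P) = _
    rw [hWmk x₀ hx₀]
    exact hm_A
  · intro w hw
    rw [hwset] at hw
    obtain ⟨Q, _, rfl⟩ := Finset.mem_image.1 hw
    show 2 ^ (Fintype.card F ^ (k - 1) - 1) - 1 ≤ ∑ P ∈ MWS14.supp Q.rep, mult P
    by_cases hSA : MWS14.supp Q.rep = MWS14.supp x₀
    · have heq : (∑ P ∈ MWS14.supp Q.rep, mult P)
          = 2 ^ (Fintype.card F ^ (k - 1) - 1) - 1 := by
        rw [hSA]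
        exact hm_A
      omega
    · have hsub : ¬ MWS14.supp Q.rep ⊆ MWS14.supp x₀ := by
        intro hcon
        exact hSA (Finset.eq_of_subset_of_card_le hcon
          (le_of_eq (hcards.trans (hcardsupp _ Q.rep_nonzero).symm)))
      obtain ⟨P, hPS, hPA⟩ := Finset.not_subset.1 hsub
      have h1 := hm_low P hPA
      have hle : mult P ≤ ∑ P ∈ MWS14.supp Q.rep, mult P :=
        Finset.single_le_sum (f := fun c => mult c) (fun _ _ => Nat.zero_le _) hPS
      omega
end
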